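/- arXiv:1411.4987 — 2 statements merged into one kernel-verified Lean document; each statement's English description precedes it below -/
import Mathlib

section
/- Archimedean Riesz spaces with strong unit have the amalgamation property: if Z, A, B are Archimedean Riesz spaces with strong units and z_A : Z → A, z_B : Z → B are injective morphisms of Riesz spaces with strong unit, then there exist an Archimedean Riesz space E with strong unit and injective morphisms f_A : A → E and f_B : B → E of Riesz spaces with strong unit such that f_A ∘ z_A = f_B ∘ z_B. -/
universe u

/-- A Riesz space with strong unit. -/
structure RieszSp : Type (u + 1) where
  V : Type u
  [grp : AddCommGroup V]
  [mod : Module ℝ V]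
  [lat : Lattice V]
  add_le_add : ∀ a b c : V, a ≤ b → c + a ≤ c + b
  smul_nonneg : ∀ (α : ℝ) (x : V), 0 ≤ α → 0 ≤ x → 0 ≤ α • x
  u : V
  u_nonneg : 0 ≤ u
  u_strong : ∀ x : V, ∃ n : ℕ, x ≤ n • u

attribute [instance] RieszSp.grp RieszSp.mod RieszSp.lat

/-- Archimedean Riesz space. -/
def RieszSp.Arch (U : RieszSp.{u}) : Prop :=
  ∀ x y : U.V, (∀ n : ℕ, n • x ≤ y) → x ≤ 0

/-- A morphism of Riesz spaces with strong unit: a linear map preserving `⊔` and `⊓`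
and sending strong unit to strong unit. -/
def RieszSpHom (U W : RieszSp.{u}) (f : U.V → W.V) : Prop :=
  (∀ x y, f (x + y) = f x + f y) ∧ (∀ (α : ℝ) (x : U.V), f (α • x) = α • f x) ∧
  (∀ x y, f (x ⊔ y) = f x ⊔ f y) ∧ (∀ x y, f (x ⊓ y) = f x ⊓ f y) ∧ f U.u = W.u

/-- A unital f-algebra with strong unit: simultaneously a Riesz space and a unital
ℓu-ring (whose ring identity is the strong unit), with compatible scalar multiplication. -/
structure FuAlg : Type (u + 1) where
  A : Type u
  [ring : CommRing A]
  [mod : Module ℝ A]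
  [lat : Lattice A]
  add_le_add : ∀ a b c : A, a ≤ b → c + a ≤ c + b
  smul_nonneg : ∀ (α : ℝ) (x : A), 0 ≤ α → 0 ≤ x → 0 ≤ α • x
  mul_nonneg : ∀ a b : A, 0 ≤ a → 0 ≤ b → 0 ≤ a * b
  f_ring : ∀ x y z : A, x ⊓ y = 0 → 0 ≤ z → (z * x) ⊓ y = 0
  one_nonneg : (0 : A) ≤ 1
  one_strong : ∀ x : A, ∃ n : ℕ, x ≤ n • (1 : A)
  smul_mul : ∀ (α : ℝ) (x y : A), α • (x * y) = (α • x) * y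

attribute [instance] FuAlg.ring FuAlg.mod FuAlg.lat

/-- Archimedean f-algebra. -/
def FuAlg.Arch (S : FuAlg.{u}) : Prop :=
  ∀ x y : S.A, (∀ n : ℕ, n • x ≤ y) → x ≤ 0

/-- A morphism of unital f-algebras: a ring homomorphism that is linear and
preserves `⊔` and `⊓`. -/
def FuAlgHom (S T : FuAlg.{u}) (f : S.A → T.A) : Prop :=
  (∀ x y, f (x + y) = f x + f y) ∧ (∀ x y, f (x * y) = f x * f y) ∧ f 1 = 1 ∧
  (∀ (α : ℝ) (x : S.A), f (α • x) = α • f x) ∧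
  (∀ x y, f (x ⊔ y) = f x ⊔ f y) ∧ (∀ x y, f (x ⊓ y) = f x ⊓ f y)

instance (U : RieszSp.{u}) : CovariantClass U.V U.V (· + ·) (· ≤ ·) :=
  ⟨fun c a b h => U.add_le_add a b c h⟩

instance (U : RieszSp.{u}) : CovariantClass U.V U.V (Function.swap (· + ·)) (· ≤ ·) :=
  inferInstance

namespace RieszSp
variable {U : RieszSp.{u}}


theorem rsmul_le_rsmul {α : ℝ} (hα : 0 ≤ α) {x y : U.V} (h : x ≤ y) : α • x ≤ α • y := by
  have h0 : (0:U.V) ≤ α • (y - x) := U.smul_nonneg α (y - x) hα (by simpa using h)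
  rw [smul_sub] at h0
  exact sub_nonneg.mp h0

theorem le_of_rsmul_le {α : ℝ} (hα : 0 < α) {x y : U.V} (h : α • x ≤ α • y) : x ≤ y := by
  have := rsmul_le_rsmul (le_of_lt (inv_pos.mpr hα)) h
  rwa [smul_smul, smul_smul, inv_mul_cancel₀ hα.ne', one_smul, one_smul] at this

theorem rsmul_sup {α : ℝ} (hα : 0 < α) (x y : U.V) : α • (x ⊔ y) = α • x ⊔ α • y := by
  apply le_antisymm
  · apply le_of_rsmul_le (inv_pos.mpr hα)
    rw [smul_smul, inv_mul_cancel₀ hα.ne', one_smul]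
    exact sup_le (le_of_rsmul_le hα (by rw [smul_smul, mul_inv_cancel₀ hα.ne', one_smul]; exact (le_sup_left : α • x ≤ _)))
      (le_of_rsmul_le hα (by rw [smul_smul, mul_inv_cancel₀ hα.ne', one_smul]; exact (le_sup_right : α • y ≤ _)))
  · exact sup_le (rsmul_le_rsmul hα.le le_sup_left) (rsmul_le_rsmul hα.le le_sup_right)

theorem rsmul_inf {α : ℝ} (hα : 0 < α) (x y : U.V) : α • (x ⊓ y) = α • x ⊓ α • y := by
  apply le_antisymm
  · exact le_inf (rsmul_le_rsmul hα.le inf_le_left) (rsmul_le_rsmul hα.le inf_le_right)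
  · apply le_of_rsmul_le (inv_pos.mpr hα)
    rw [smul_smul, inv_mul_cancel₀ hα.ne', one_smul]
    exact le_inf (le_of_rsmul_le hα (by rw [smul_smul, mul_inv_cancel₀ hα.ne', one_smul]; exact (inf_le_left : _ ≤ α • x)))
      (le_of_rsmul_le hα (by rw [smul_smul, mul_inv_cancel₀ hα.ne', one_smul]; exact (inf_le_right : _ ≤ α • y)))

theorem abs_def (a : U.V) : |a| = a ⊔ -a := rfl

theorem abs_add_le (a b : U.V) : |a + b| ≤ |a| + |b| := by
  apply sup_le
  · exact _root_.add_le_add (le_abs_self a) (le_abs_self b)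
  · rw [neg_add]; exact _root_.add_le_add (neg_le_abs a) (neg_le_abs b)

theorem abs_nn (a : U.V) : 0 ≤ |a| := abs_nonneg a

theorem abs_rsmul {α : ℝ} (hα : 0 ≤ α) (a : U.V) : |α • a| = α • |a| := by
  rcases eq_or_lt_of_le hα with h | h
  · simp [← h]
  · rw [abs_def, abs_def, rsmul_sup h, smul_neg]

theorem abs_eq_zero' {a : U.V} (h : |a| = 0) : a = 0 := by
  have h1 : a ≤ 0 := h ▸ le_abs_self a
  have h2 : -a ≤ 0 := h ▸ neg_le_abs a
  exact le_antisymm h1 (by simpa using h2)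

theorem nat_smul_cast (n : ℕ) (a : U.V) : (n : ℝ) • a = n • a := by
  exact_mod_cast Nat.cast_smul_eq_nsmul ℝ n a

theorem u_strong' (x : U.V) : ∃ r : ℝ, 0 ≤ r ∧ x ≤ r • U.u := by
  obtain ⟨n, hn⟩ := U.u_strong x
  exact ⟨n, Nat.cast_nonneg n, by rw [nat_smul_cast]; exact hn⟩



/-- An ℓ-ideal (as a property of a set). -/
def IsIdl (U : RieszSp.{u}) (I : Set U.V) : Prop :=
  (0 : U.V) ∈ I ∧ (∀ a b : U.V, a ∈ I → b ∈ I → a + b ∈ I) ∧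
    (∀ a b : U.V, b ∈ I → |a| ≤ |b| → a ∈ I)

theorem IsIdl.abs_mem {I : Set U.V} (hI : IsIdl U I) {a : U.V} (ha : a ∈ I) : |a| ∈ I :=
  hI.2.2 _ _ ha (by rw [abs_abs])

theorem IsIdl.neg_mem {I : Set U.V} (hI : IsIdl U I) {a : U.V} (ha : a ∈ I) : -a ∈ I :=
  hI.2.2 _ _ ha (by rw [abs_neg])

theorem IsIdl.nsmul_mem {I : Set U.V} (hI : IsIdl U I) {a : U.V} (ha : a ∈ I) (n : ℕ) :
    n • a ∈ I := by
  induction n with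
  | zero => simpa using hI.1
  | succ n ih => rw [succ_nsmul]; exact hI.2.1 _ _ ih ha

theorem IsIdl.rsmul_mem {I : Set U.V} (hI : IsIdl U I) {a : U.V} (ha : a ∈ I) {t : ℝ}
    (ht : 0 ≤ t) : t • a ∈ I := by
  obtain ⟨n, hn⟩ : ∃ n : ℕ, t ≤ n := exists_nat_ge t
  apply hI.2.2 _ (n • |a|) (hI.nsmul_mem (hI.abs_mem ha) n)
  have h1 : |t • a| = t • |a| := abs_rsmul ht a
  have h2 : (0:U.V) ≤ n • |a| := nsmul_nonneg (abs_nn a) n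
  rw [h1, abs_of_nonneg h2, ← nat_smul_cast]
  have := rsmul_le_rsmul (sub_nonneg.mpr hn) (abs_nn a : (0:U.V) ≤ |a|)
  rw [smul_zero] at this
  calc t • |a| ≤ t • |a| + ((n:ℝ) - t) • |a| := le_add_of_nonneg_right this
  _ = (n:ℝ) • |a| := by rw [← add_smul]; ring_nf

/-- The relation `x ≤ y mod I`. -/
def qle (I : Set U.V) (x y : U.V) : Prop := ∃ i ∈ I, x ≤ y + i

theorem qle_refl {I : Set U.V} (hI : IsIdl U I) (x : U.V) : qle I x x :=
  ⟨0, hI.1, by simp⟩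

theorem qle_of_le {I : Set U.V} (hI : IsIdl U I) {x y : U.V} (h : x ≤ y) : qle I x y :=
  ⟨0, hI.1, by simpa using h⟩

theorem qle_trans {I : Set U.V} (hI : IsIdl U I) {x y z : U.V} (h1 : qle I x y)
    (h2 : qle I y z) : qle I x z := by
  obtain ⟨i, hi, hxi⟩ := h1
  obtain ⟨j, hj, hyj⟩ := h2
  exact ⟨j + i, hI.2.1 _ _ hj hi, by
    calc x ≤ y + i := hxi
    _ ≤ z + j + i := by exact add_le_add_left hyj i
    _ = z + (j + i) := by abel⟩

theorem qle_add {I : Set U.V} {x y z w : U.V} (hI : IsIdl U I) (h1 : qle I x y)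
    (h2 : qle I z w) : qle I (x + z) (y + w) := by
  obtain ⟨i, hi, hxi⟩ := h1
  obtain ⟨j, hj, hzj⟩ := h2
  refine ⟨i + j, hI.2.1 _ _ hi hj, ?_⟩
  calc x + z ≤ (y + i) + (z) := add_le_add_left hxi z
  _ ≤ (y + i) + (w + j) := add_le_add_right hzj _
  _ = y + w + (i + j) := by abel

theorem qle_rsmul {I : Set U.V} {x y : U.V} (hI : IsIdl U I) {t : ℝ} (ht : 0 ≤ t)
    (h : qle I x y) : qle I (t • x) (t • y) := by
  obtain ⟨i, hi, hxi⟩ := h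
  exact ⟨t • i, hI.rsmul_mem hi ht, by
    have := rsmul_le_rsmul ht hxi; rwa [smul_add] at this⟩



/-- A lattice state. -/
def IsState (U : RieszSp.{u}) (φ : U.V → ℝ) : Prop :=
  (∀ x y, φ (x + y) = φ x + φ y) ∧ (∀ (α : ℝ) (x), φ (α • x) = α * φ x) ∧
  (∀ x y, φ (x ⊔ y) = max (φ x) (φ y)) ∧ (∀ x y, φ (x ⊓ y) = min (φ x) (φ y)) ∧ φ U.u = 1

theorem exists_maximal_idl (I₀ : Set U.V) (hI₀ : IsIdl U I₀) (w : U.V)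
    (hprop : ∀ i ∈ I₀, ¬ w ≤ i) :
    ∃ M : Set U.V, IsIdl U M ∧ I₀ ⊆ M ∧ (∀ j ∈ M, ¬ w ≤ j) ∧
      (∀ a b : U.V, 0 ≤ a → 0 ≤ b → a ⊓ b ∈ M → a ∈ M ∨ b ∈ M) := by
  classical
  set C : Set (Set U.V) := {J | IsIdl U J ∧ I₀ ⊆ J ∧ ∀ j ∈ J, ¬ w ≤ j} with hC
  have hI₀C : I₀ ∈ C := ⟨hI₀, subset_rfl, hprop⟩
  have hchains : ∀ c ⊆ C, IsChain (· ⊆ ·) c → c.Nonempty → ∃ ub ∈ C, ∀ s ∈ c, s ⊆ ub := by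
    rintro c hcC hchain ⟨J0, hJ0⟩
    refine ⟨⋃₀ c, ⟨⟨?_, ?_, ?_⟩, ?_, ?_⟩, fun s hs => Set.subset_sUnion_of_mem hs⟩
    · exact ⟨J0, hJ0, (hcC hJ0).1.1⟩
    · rintro a b ⟨J1, hJ1, haJ1⟩ ⟨J2, hJ2, hbJ2⟩
      rcases hchain.total hJ1 hJ2 with h | h
      · exact ⟨J2, hJ2, (hcC hJ2).1.2.1 a b (h haJ1) hbJ2⟩
      · exact ⟨J1, hJ1, (hcC hJ1).1.2.1 a b haJ1 (h hbJ2)⟩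
    · rintro a b ⟨J1, hJ1, hbJ1⟩ hab
      exact ⟨J1, hJ1, (hcC hJ1).1.2.2 a b hbJ1 hab⟩
    · exact fun x hx => ⟨J0, hJ0, (hcC hJ0).2.1 hx⟩
    · rintro j ⟨J1, hJ1, hjJ1⟩
      exact (hcC hJ1).2.2 j hjJ1
  obtain ⟨M, hI₀M, hmax⟩ := zorn_subset_nonempty C hchains I₀ hI₀C
  obtain ⟨hMI, -, hMw⟩ := hmax.1
  refine ⟨M, hMI, hI₀M, hMw, ?_⟩
  -- primality
  intro a b ha hb hab
  by_contra hcon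
  push_neg at hcon
  obtain ⟨haM, hbM⟩ := hcon
  have key : ∀ x : U.V, 0 ≤ x → x ∉ M → ∃ j ∈ M, ∃ r : ℝ, 0 ≤ r ∧ w ≤ |j| + r • x := by
    intro x hx hxM
    set Mx : Set U.V := {y | ∃ j ∈ M, ∃ r : ℝ, 0 ≤ r ∧ |y| ≤ |j| + r • x} with hMx
    have hMxIdl : IsIdl U Mx := by
      refine ⟨⟨0, hMI.1, 0, le_rfl, by simp⟩, ?_, ?_⟩
      · rintro p q ⟨j1, hj1, r1, hr1, hp⟩ ⟨j2, hj2, r2, hr2, hq⟩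
        refine ⟨|j1| + |j2|, hMI.2.1 _ _ (hMI.abs_mem hj1) (hMI.abs_mem hj2), r1 + r2,
          by positivity, ?_⟩
        have habs : |(|j1| + |j2|)| = |j1| + |j2| :=
          abs_of_nonneg (add_nonneg (abs_nn j1) (abs_nn j2))
        rw [habs, add_smul]
        calc |p + q| ≤ |p| + |q| := abs_add_le p q
        _ ≤ (|j1| + r1 • x) + (|j2| + r2 • x) := _root_.add_le_add hp hq
        _ = |j1| + |j2| + (r1 • x + r2 • x) := by abel
      · rintro p q ⟨j1, hj1, r1, hr1, hq⟩ hpq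
        exact ⟨j1, hj1, r1, hr1, le_trans hpq hq⟩
    have hMsub : M ⊆ Mx := fun y hy => ⟨y, hy, 0, le_rfl, by simp⟩
    have hxMx : x ∈ Mx := ⟨0, hMI.1, 1, zero_le_one, by rw [abs_of_nonneg hx]; simp⟩
    have hMxnC : Mx ∉ C := fun hMxC => hxM (hmax.2 hMxC hMsub hxMx)
    -- hence the w-condition fails for Mx
    have : ∃ y ∈ Mx, w ≤ y := by
      by_contra hno
      push_neg at hno
      exact hMxnC ⟨hMxIdl, le_trans hI₀M hMsub, hno⟩
    obtain ⟨y, ⟨j, hj, r, hr, hy⟩, hwy⟩ := this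
    exact ⟨j, hj, r, hr, le_trans hwy (le_trans (le_abs_self y) hy)⟩
  obtain ⟨j1, hj1, r, hr, hwa⟩ := key a ha haM
  obtain ⟨j2, hj2, s, hs, hwb⟩ := key b hb hbM
  set t : ℝ := max r s with ht
  have hrt : r ≤ t := le_max_left r s
  have hst : s ≤ t := le_max_right r s
  have ht0 : (0:ℝ) ≤ t := le_trans hr hrt
  have hstep : ∀ (j : U.V) (c : ℝ) (x : U.V), 0 ≤ x → c ≤ t → w ≤ |j| + c • x →
      w ≤ |j| + t • x := by
    intro j c x hx hct hw
    refine le_trans hw (add_le_add_right ?_ _)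
    have h0 : (0:U.V) ≤ (t - c) • x := U.smul_nonneg _ _ (by linarith) hx
    calc c • x = c • x + 0 := by rw [add_zero]
    _ ≤ c • x + (t - c) • x := add_le_add_right h0 _
    _ = t • x := by rw [← add_smul]; ring_nf
  have hwa' : w ≤ |j1| + t • a := hstep j1 r a ha hrt hwa
  have hwb' : w ≤ |j2| + t • b := hstep j2 s b hb hst hwb
  rcases eq_or_lt_of_le ht0 with h0 | h0
  · -- t = 0 : direct contradiction
    apply hMw _ (hMI.abs_mem hj1)
    simpa [← h0] using hwa'
  · have h1 : w ≤ (|j1| + t • a) ⊓ (|j2| + t • b) := le_inf hwa' hwb'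
    have h2 : (|j1| + t • a) ⊓ (|j2| + t • b) ≤
        (|j1| + |j2| + t • a) ⊓ (|j1| + |j2| + t • b) :=
      inf_le_inf (add_le_add_left (le_add_of_nonneg_right (abs_nn j2)) _)
        (add_le_add_left (le_add_of_nonneg_left (abs_nn j1)) _)
    have h3 : (|j1| + |j2| + t • a) ⊓ (|j1| + |j2| + t • b) =
        |j1| + |j2| + t • (a ⊓ b) := by
      rw [← add_inf (t • a) (t • b) (|j1| + |j2|), rsmul_inf h0]
    have hmem : |j1| + |j2| + t • (a ⊓ b) ∈ M :=
      hMI.2.1 _ _ (hMI.2.1 _ _ (hMI.abs_mem hj1) (hMI.abs_mem hj2)) (hMI.rsmul_mem hab ht0)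
    exact hMw _ hmem (le_trans h1 (le_trans h2 (le_of_eq h3)))

theorem exists_state (I₀ : Set U.V) (hI₀ : IsIdl U I₀) (w : U.V)
    (hprop : ∀ i ∈ I₀, ¬ w ≤ i) :
    ∃ (M : Set U.V) (φ : U.V → ℝ), IsIdl U M ∧ I₀ ⊆ M ∧ (∀ j ∈ M, ¬ w ≤ j) ∧
      (∀ a b : U.V, 0 ≤ a → 0 ≤ b → a ⊓ b ∈ M → a ∈ M ∨ b ∈ M) ∧
      IsState U φ ∧ (∀ i ∈ M, φ i = 0) := by
  classical
  obtain ⟨M, hMI, hI₀M, hMw, hprime⟩ := exists_maximal_idl I₀ hI₀ w hprop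
  have hu : ∀ i ∈ M, ¬ U.u ≤ i := by
    intro i hi hui
    obtain ⟨r, hr0, hwr⟩ := u_strong' (U := U) w
    exact hMw _ (hMI.rsmul_mem hi hr0) (le_trans hwr (rsmul_le_rsmul hr0 hui))
  have hεu : ∀ ε : ℝ, 0 < ε → ¬ qle M (ε • U.u) 0 := by
    rintro ε hε ⟨i, hi, h⟩
    rw [zero_add] at h
    have h2 := rsmul_le_rsmul (le_of_lt (inv_pos.mpr hε)) h
    rw [smul_smul, inv_mul_cancel₀ hε.ne', one_smul] at h2
    exact hu _ (hMI.rsmul_mem hi (inv_pos.mpr hε).le) h2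
  have htot : ∀ x y : U.V, qle M x y ∨ qle M y x := by
    intro x y
    rcases hprime ((x - y)⁺) ((x - y)⁻) (posPart_nonneg _) (negPart_nonneg _)
      (by rw [posPart_inf_negPart_eq_zero]; exact hMI.1) with h | h
    · left
      exact ⟨_, h, by
        have h1 : x - y ≤ (x - y)⁺ := le_sup_left
        exact sub_le_iff_le_add'.mp h1⟩
    · right
      refine ⟨_, h, ?_⟩
      have h1 : y - x ≤ (x - y)⁻ := by
        rw [negPart_def, neg_sub]; exact le_sup_left
      exact sub_le_iff_le_add'.mp h1
  set S : U.V → Set ℝ := fun x => {r : ℝ | qle M (r • U.u) x} with hS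
  set φ : U.V → ℝ := fun x => sSup (S x) with hφ
  have hSne : ∀ x, (S x).Nonempty := by
    intro x
    obtain ⟨r, hr0, h⟩ := u_strong' (U := U) (-x)
    refine ⟨-r, 0, hMI.1, ?_⟩
    rw [add_zero, neg_smul]
    have h2 := add_le_add_right h (x - r • U.u)
    rw [show x - r • U.u + -x = -(r • U.u) by abel,
      show x - r • U.u + r • U.u = x by abel] at h2
    exact h2
  have hsmul_le : ∀ (c d : ℝ), c ≤ d → c • U.u ≤ d • U.u := by
    intro c d hcd
    have h0 : (0:U.V) ≤ (d - c) • U.u := U.smul_nonneg _ _ (by linarith) U.u_nonneg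
    calc c • U.u = c • U.u + 0 := by rw [add_zero]
    _ ≤ c • U.u + (d - c) • U.u := add_le_add_right h0 _
    _ = d • U.u := by rw [← add_smul]; ring_nf
  have hbdd : ∀ x, BddAbove (S x) := by
    intro x
    obtain ⟨m, hm0, hxm⟩ := u_strong' x
    refine ⟨m, fun r hr => ?_⟩
    by_contra hc
    push_neg at hc
    obtain ⟨i, hi, hri⟩ := hr
    apply hεu (r - m) (by linarith)
    refine ⟨i, hi, ?_⟩
    rw [zero_add, sub_smul]
    have : r • U.u ≤ m • U.u + i := le_trans hri (add_le_add_left hxm i)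
    exact sub_le_iff_le_add'.mpr this
  have hdc : ∀ (x : U.V) (r r' : ℝ), r' ≤ r → r ∈ S x → r' ∈ S x := by
    rintro x r r' hle ⟨i, hi, h⟩
    exact ⟨i, hi, le_trans (hsmul_le _ _ hle) h⟩
  have hlow : ∀ (x : U.V) (ε : ℝ), 0 < ε → (φ x - ε) ∈ S x := by
    intro x ε hε
    obtain ⟨r, hrS, hrgt⟩ := exists_lt_of_lt_csSup (hSne x)
      (show φ x - ε < sSup (S x) by rw [hφ]; simp only; linarith)
    exact hdc x r _ hrgt.le hrS
  have hup : ∀ (x : U.V) (ε : ℝ), 0 < ε → qle M x ((φ x + ε) • U.u) := by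
    intro x ε hε
    have hnot : (φ x + ε) ∉ S x := by
      intro h
      have := le_csSup (hbdd x) h
      rw [hφ] at *
      simp only at this
      linarith
    rcases htot x ((φ x + ε) • U.u) with h | h
    · exact h
    · exact absurd h hnot
  have hle_of_qle_u : ∀ (x : U.V) (c : ℝ), qle M x (c • U.u) → φ x ≤ c := by
    rintro x c ⟨j, hj, hxc⟩
    apply csSup_le (hSne x)
    rintro r ⟨i, hi, hri⟩
    by_contra hrc
    push_neg at hrc
    apply hεu (r - c) (by linarith)
    refine ⟨i + j, hMI.2.1 _ _ hi hj, ?_⟩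
    rw [zero_add, sub_smul]
    have h1 : r • U.u ≤ c • U.u + j + i := le_trans hri (add_le_add_left hxc i)
    have h2 : r • U.u ≤ c • U.u + (i + j) := by
      calc r • U.u ≤ c • U.u + j + i := h1
      _ = c • U.u + (i + j) := by abel
    exact sub_le_iff_le_add'.mpr h2
  have hqle_mono : ∀ x y : U.V, qle M x y → φ x ≤ φ y := by
    rintro x y ⟨i, hi, h⟩
    apply csSup_le (hSne x)
    rintro r ⟨j, hj, hrj⟩
    apply le_csSup (hbdd y)
    exact ⟨j + i, hMI.2.1 _ _ hj hi, by
      calc r • U.u ≤ x + j := hrj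
      _ ≤ y + i + j := add_le_add_left h j
      _ = y + (j + i) := by abel⟩
  have hzero : φ 0 = 0 := by
    apply le_antisymm
    · exact hle_of_qle_u 0 0 (by rw [zero_smul]; exact qle_refl hMI 0)
    · exact le_csSup (hbdd 0) ⟨0, hMI.1, by rw [zero_smul, add_zero]⟩
  have hadd : ∀ x y : U.V, φ (x + y) = φ x + φ y := by
    intro x y
    apply le_antisymm
    · by_contra hc
      push_neg at hc
      set ε := (φ (x + y) - φ x - φ y) / 3 with hε
      have hε0 : 0 < ε := by
        rw [hε]; linarith
      have h3 : qle M (x + y) (((φ x + ε) + (φ y + ε)) • U.u) := by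
        have := qle_add hMI (hup x ε hε0) (hup y ε hε0)
        rwa [← add_smul] at this
      have := hle_of_qle_u _ _ h3
      rw [hε] at this
      linarith
    · by_contra hc
      push_neg at hc
      set ε := (φ x + φ y - φ (x + y)) / 3 with hε
      have hε0 : 0 < ε := by rw [hε]; linarith
      have h3 : ((φ x - ε) + (φ y - ε)) ∈ S (x + y) := by
        have := qle_add hMI (hlow x ε hε0) (hlow y ε hε0)
        rwa [← add_smul] at this
      have h4 := le_csSup (hbdd (x + y)) h3
      have h6 : sSup (S (x + y)) = φ (x + y) := rfl
      linarith [h4, h6]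
  have hneg : ∀ x : U.V, φ (-x) = - φ x := by
    intro x
    have h := hadd x (-x)
    rw [show x + -x = 0 by abel, hzero] at h
    linarith
  have hsmul_pos : ∀ (α : ℝ), 0 < α → ∀ x : U.V, φ (α • x) = α * φ x := by
    intro α hα x
    apply le_antisymm
    · apply csSup_le (hSne _)
      intro r hr
      have h1 := qle_rsmul hMI (inv_pos.mpr hα).le hr
      rw [smul_smul, smul_smul, inv_mul_cancel₀ hα.ne', one_smul] at h1
      have h2 : α⁻¹ * r ≤ φ x := le_csSup (hbdd x) h1
      calc r = α * (α⁻¹ * r) := by field_simp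
      _ ≤ α * φ x := mul_le_mul_of_nonneg_left h2 hα.le
    · by_contra hc
      push_neg at hc
      set ε := (α * φ x - φ (α • x)) / (2 * α) with hε
      have hε0 : 0 < ε := by
        rw [hε]; exact div_pos (by linarith) (by linarith)
      have h2 := qle_rsmul hMI hα.le (hlow x ε hε0)
      rw [smul_smul] at h2
      have h3 : α * (φ x - ε) ≤ φ (α • x) := le_csSup (hbdd _) h2
      have h4 : α * ε = (α * φ x - φ (α • x)) / 2 := by
        rw [hε]; field_simp
      rw [mul_sub] at h3
      linarith
  have hsmul : ∀ (α : ℝ) (x : U.V), φ (α • x) = α * φ x := by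
    intro α x
    rcases lt_trichotomy α 0 with h | h | h
    · have h1 := hsmul_pos (-α) (by linarith) (-x)
      rw [neg_smul_neg, hneg] at h1
      rw [h1]; ring
    · rw [h, zero_smul, hzero, zero_mul]
    · exact hsmul_pos α h x
  have hsup_case : ∀ x y : U.V, qle M x y → φ (x ⊔ y) = max (φ x) (φ y) := by
    rintro x y ⟨i, hi, hxy⟩
    have hxy' : x ≤ y + |i| := le_trans hxy (add_le_add_right (le_abs_self i) y)
    have h1 : qle M (x ⊔ y) y := by
      refine ⟨|i|, hMI.abs_mem hi, ?_⟩
      calc x ⊔ y ≤ (y + |i|) ⊔ y := sup_le_sup_right hxy' y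
      _ = y + |i| := sup_eq_left.mpr (le_add_of_nonneg_right (abs_nn i))
    have h2 : qle M y (x ⊔ y) := qle_of_le hMI le_sup_right
    have hφxy : φ x ≤ φ y := hqle_mono _ _ ⟨i, hi, hxy⟩
    rw [max_eq_right hφxy]
    exact le_antisymm (hqle_mono _ _ h1) (hqle_mono _ _ h2)
  have hinf_case : ∀ x y : U.V, qle M x y → φ (x ⊓ y) = min (φ x) (φ y) := by
    rintro x y ⟨i, hi, hxy⟩
    have hxy' : x ≤ y + |i| := le_trans hxy (add_le_add_right (le_abs_self i) y)
    have h1 : qle M x (x ⊓ y) := by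
      refine ⟨|i|, hMI.abs_mem hi, ?_⟩
      have hx1 : x - |i| ≤ x := by
        have h0 : (0:U.V) ≤ |i| := abs_nn i
        calc x - |i| ≤ x - 0 := sub_le_sub_left h0 x
        _ = x := by rw [sub_zero]
      have hx2 : x - |i| ≤ y := by
        have h7 := add_le_add_left hxy' (-|i|)
        rw [show y + |i| + -|i| = y by abel] at h7
        simpa [sub_eq_add_neg] using h7
      have h5 : x - |i| ≤ x ⊓ y := le_inf hx1 hx2
      have h8 := add_le_add_left h5 |i|
      rw [show x - |i| + |i| = x by abel] at h8
      exact h8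
    have h2 : qle M (x ⊓ y) x := qle_of_le hMI inf_le_left
    have hφxy : φ x ≤ φ y := hqle_mono _ _ ⟨i, hi, hxy⟩
    rw [min_eq_left hφxy]
    exact le_antisymm (hqle_mono _ _ h2) (hqle_mono _ _ h1)
  have hsup : ∀ x y : U.V, φ (x ⊔ y) = max (φ x) (φ y) := by
    intro x y
    rcases htot x y with h | h
    · exact hsup_case x y h
    · rw [sup_comm, max_comm]; exact hsup_case y x h
  have hinf : ∀ x y : U.V, φ (x ⊓ y) = min (φ x) (φ y) := by
    intro x y
    rcases htot x y with h | h
    · exact hinf_case x y h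
    · rw [inf_comm, min_comm]; exact hinf_case y x h
  have huφ : φ U.u = 1 := by
    apply le_antisymm
    · exact hle_of_qle_u _ 1 (by rw [one_smul]; exact qle_refl hMI _)
    · exact le_csSup (hbdd _) ⟨0, hMI.1, by rw [one_smul, add_zero]⟩
  have hvan : ∀ i ∈ M, φ i = 0 := by
    intro i hi
    apply le_antisymm
    · have h1 : qle M i 0 := ⟨i, hi, by rw [zero_add]⟩
      have := hqle_mono _ _ h1
      rwa [hzero] at this
    · have h1 : qle M 0 i := by
        refine ⟨|i| + (-i), hMI.2.1 _ _ (hMI.abs_mem hi) (hMI.neg_mem hi), ?_⟩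
        have : i + (|i| + -i) = |i| := by abel
        rw [this]
        exact abs_nn i
      have := hqle_mono _ _ h1
      rwa [hzero] at this
  exact ⟨M, φ, hMI, hI₀M, hMw, hprime, ⟨hadd, hsmul, hsup, hinf, huφ⟩, hvan⟩

theorem IsState.zero {φ : U.V → ℝ} (hφ : IsState U φ) : φ 0 = 0 := by
  have := hφ.2.1 0 0
  rwa [zero_smul, zero_mul] at this

theorem IsState.mono {φ : U.V → ℝ} (hφ : IsState U φ) {x y : U.V} (h : x ≤ y) :
    φ x ≤ φ y := by
  have h1 : x ⊔ y = y := sup_eq_right.mpr h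
  have h2 := hφ.2.2.1 x y
  rw [h1] at h2
  rw [h2]
  exact le_max_left _ _

theorem IsState.neg {φ : U.V → ℝ} (hφ : IsState U φ) (x : U.V) : φ (-x) = - φ x := by
  have := hφ.2.1 (-1) x
  rwa [neg_one_smul, neg_one_mul] at this

theorem IsState.abs {φ : U.V → ℝ} (hφ : IsState U φ) (x : U.V) : φ |x| = |φ x| := by
  have h1 : |x| = x ⊔ -x := rfl
  rw [h1, hφ.2.2.1 x (-x), hφ.neg x]
  exact (abs_eq_max_neg (a := φ x)).symm

theorem IsState.nsmul {φ : U.V → ℝ} (hφ : IsState U φ) (n : ℕ) (x : U.V) :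
    φ (n • x) = n * φ x := by
  rw [← nat_smul_cast, hφ.2.1]

/-- Separation: states separate points of Archimedean Riesz spaces. -/
theorem exists_sep_state (hU : U.Arch) {x : U.V} (hx : x ≠ 0) :
    ∃ φ : U.V → ℝ, IsState U φ ∧ φ x ≠ 0 := by
  classical
  set a := |x| with ha
  have ha0 : (0:U.V) ≤ a := abs_nn x
  have hane : a ≠ 0 := fun h => hx (abs_eq_zero' h)
  have hex : ∃ n : ℕ, ¬ (n • a ≤ U.u) := by
    by_contra h
    push_neg at h
    exact hane (le_antisymm (hU a U.u h) ha0)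
  obtain ⟨n, hn⟩ := hex
  have hnn : 0 < (n:ℝ) := by
    have : n ≠ 0 := by
      rintro rfl
      exact hn (by simpa using U.u_nonneg)
    exact_mod_cast Nat.pos_of_ne_zero this
  set d := (n:ℝ) • a - U.u with hd
  set w := d⁺ with hw
  have hIdl0 : IsIdl U ({0} : Set U.V) := by
    refine ⟨rfl, ?_, ?_⟩
    · rintro p q rfl rfl; simp
    · rintro p q rfl hpq
      simp only [Set.mem_singleton_iff]
      rw [abs_zero] at hpq
      exact abs_eq_zero' (le_antisymm hpq (abs_nn p))
  have hprop0 : ∀ i ∈ ({0} : Set U.V), ¬ w ≤ i := by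
    rintro i rfl hle
    have h1 : w = 0 := le_antisymm hle (posPart_nonneg d)
    have h2 : d ≤ 0 := posPart_eq_zero.mp h1
    apply hn
    rw [← nat_smul_cast]
    have := sub_nonpos.mp (hd ▸ h2)
    exact this
  obtain ⟨M, φ, hMI, -, hMw, hprime, hst, hvan⟩ := exists_state {0} hIdl0 w hprop0
  have hwM : w ∉ M := fun h => hMw w h le_rfl
  have hdneg : d⁻ ∈ M := by
    rcases hprime (d⁺) (d⁻) (posPart_nonneg _) (negPart_nonneg _)
      (by rw [posPart_inf_negPart_eq_zero]; exact hMI.1) with h | h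
    · exact absurd h hwM
    · exact h
  have hφd : φ d = φ (d⁺) := by
    have h1 : d⁺ + -(d⁻) = d := by rw [← sub_eq_add_neg]; exact posPart_sub_negPart d
    have h2 := hst.1 (d⁺) (-(d⁻))
    rw [h1, hst.neg, hvan _ hdneg] at h2
    rw [h2]; ring
  have hd0 : 0 ≤ φ d := by
    rw [hφd]
    have := hst.mono (posPart_nonneg d)
    rwa [hst.zero] at this
  have hφd2 : φ d = (n:ℝ) * φ a - 1 := by
    have h2 := hst.1 ((n:ℝ) • a) (-U.u)
    rw [show (n:ℝ) • a + -U.u = d by rw [← sub_eq_add_neg], hst.2.1, hst.neg,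
      hst.2.2.2.2] at h2
    rw [h2]; ring
  have hφa : 0 < φ a := by
    clear hn hprop0
    nlinarith [hd0, hφd2, hnn]
  refine ⟨φ, hst, ?_⟩
  have := hst.abs x
  rw [← ha] at this
  intro h0
  rw [this, h0, abs_zero] at hφa
  exact lt_irrefl _ hφa

variable {W : RieszSp.{u}}

theorem hom_zero {f : U.V → W.V} (hf : RieszSpHom U W f) : f 0 = 0 := by
  have := hf.2.1 0 0
  rwa [zero_smul, zero_smul] at this

theorem hom_neg {f : U.V → W.V} (hf : RieszSpHom U W f) (x : U.V) : f (-x) = -(f x) := by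
  have := hf.2.1 (-1) x
  rwa [neg_one_smul, neg_one_smul] at this

theorem hom_mono {f : U.V → W.V} (hf : RieszSpHom U W f) {x y : U.V} (h : x ≤ y) :
    f x ≤ f y := by
  have h1 : x ⊔ y = y := sup_eq_right.mpr h
  have h2 := hf.2.2.1 x y
  rw [h1] at h2
  rw [h2]
  exact le_sup_left

theorem hom_abs {f : U.V → W.V} (hf : RieszSpHom U W f) (x : U.V) : f |x| = |f x| := by
  have h1 : |x| = x ⊔ -x := rfl
  have h2 : |f x| = f x ⊔ -(f x) := rfl
  rw [h1, hf.2.2.1 x (-x), hom_neg hf, h2]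

theorem hom_reflect {f : U.V → W.V} (hf : RieszSpHom U W f) (hi : Function.Injective f)
    {x y : U.V} (h : f x ≤ f y) : x ≤ y := by
  have h1 : f (x ⊔ y) = f y := by
    rw [hf.2.2.1 x y]
    exact sup_eq_right.mpr h
  have h2 : x ⊔ y = y := hi h1
  exact le_sup_left.trans (le_of_eq h2)

theorem IsState.comp {φ : W.V → ℝ} (hφ : IsState W φ) {f : U.V → W.V}
    (hf : RieszSpHom U W f) : IsState U (φ ∘ f) := by
  refine ⟨fun x y => ?_, fun α x => ?_, fun x y => ?_, fun x y => ?_, ?_⟩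
  · simp only [Function.comp_apply, hf.1, hφ.1]
  · simp only [Function.comp_apply, hf.2.1, hφ.2.1]
  · simp only [Function.comp_apply, hf.2.2.1, hφ.2.2.1]
  · simp only [Function.comp_apply, hf.2.2.2.1, hφ.2.2.2.1]
  · simp only [Function.comp_apply, hf.2.2.2.2, hφ.2.2.2.2]

/-- Extension of states along injective unital embeddings. -/
theorem exists_ext_state {Zs Bs : RieszSp.{u}} (zB : Zs.V → Bs.V)
    (hzB : RieszSpHom Zs Bs zB) (hiB : Function.Injective zB)
    {φ : Zs.V → ℝ} (hφ : IsState Zs φ) :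
    ∃ ψ : Bs.V → ℝ, IsState Bs ψ ∧ ∀ z, ψ (zB z) = φ z := by
  classical
  set I₀ : Set Bs.V := {b | ∃ z : Zs.V, 0 ≤ z ∧ φ z = 0 ∧ |b| ≤ zB z} with hI₀
  have hIdl : IsIdl Bs I₀ := by
    refine ⟨⟨0, le_rfl, hφ.zero, by rw [hom_zero hzB, abs_zero]⟩, ?_, ?_⟩
    · rintro p q ⟨z1, hz1, hφ1, hp⟩ ⟨z2, hz2, hφ2, hq⟩
      refine ⟨z1 + z2, add_nonneg hz1 hz2, by rw [hφ.1, hφ1, hφ2, add_zero], ?_⟩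
      rw [hzB.1]
      exact le_trans (abs_add_le p q) (_root_.add_le_add hp hq)
    · rintro p q ⟨z1, hz1, hφ1, hq⟩ hpq
      exact ⟨z1, hz1, hφ1, le_trans hpq hq⟩
  have hprop : ∀ i ∈ I₀, ¬ Bs.u ≤ i := by
    rintro i ⟨z1, hz1, hφ1, hi⟩ hui
    have h1 : Bs.u ≤ zB z1 := le_trans hui (le_trans (le_abs_self i) hi)
    rw [← hzB.2.2.2.2] at h1
    have h2 : Zs.u ≤ z1 := hom_reflect hzB hiB h1
    have h3 := hφ.mono h2
    rw [hφ.2.2.2.2, hφ1] at h3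
    linarith
  obtain ⟨M, ψ, hMI, hI₀M, -, -, hψ, hvan⟩ := exists_state I₀ hIdl Bs.u hprop
  refine ⟨ψ, hψ, fun z => ?_⟩
  set c : Zs.V := z + (-(φ z)) • Zs.u with hc
  have hφc : φ c = 0 := by
    rw [hc, hφ.1, hφ.2.1, hφ.2.2.2.2]
    ring
  have hmem : zB c ∈ I₀ := by
    refine ⟨|c|, abs_nn c, by rw [hφ.abs, hφc, abs_zero], ?_⟩
    rw [hom_abs hzB]
  have h0 : ψ (zB c) = 0 := hvan _ (hI₀M hmem)
  have h1 : zB c = zB z + (-(φ z)) • Bs.u := by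
    rw [hc, hzB.1, hzB.2.1, hzB.2.2.2.2]
  rw [h1, hψ.1, hψ.2.1, hψ.2.2.2.2] at h0
  linarith
end RieszSp

theorem bcf_le_iff {X : Type*} [TopologicalSpace X]
    {f g : BoundedContinuousFunction X ℝ} : f ≤ g ↔ ∀ p, f p ≤ g p := Iff.rfl


open RieszSp in
/-- Archimedean Riesz spaces with strong unit have the amalgamation property. -/
theorem stmt16 (Z A B : RieszSp.{u}) (hZ : Z.Arch) (hA : A.Arch) (hB : B.Arch)
    (zA : Z.V → A.V) (zB : Z.V → B.V)
    (hzA : RieszSpHom Z A zA) (hzB : RieszSpHom Z B zB)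
    (hiA : Function.Injective zA) (hiB : Function.Injective zB) :
    ∃ (E : RieszSp.{u}) (fA : A.V → E.V) (fB : B.V → E.V),
      E.Arch ∧ RieszSpHom A E fA ∧ RieszSpHom B E fB ∧
      Function.Injective fA ∧ Function.Injective fB ∧ fA ∘ zA = fB ∘ zB := by
  classical
  let Pt : Type u := {p : (A.V → ℝ) × (B.V → ℝ) //
    IsState A p.1 ∧ IsState B p.2 ∧ ∀ z, p.1 (zA z) = p.2 (zB z)}
  letI : TopologicalSpace Pt := ⊥
  haveI : DiscreteTopology Pt := ⟨rfl⟩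
  -- uniform bounds on states
  have bnd : ∀ (U : RieszSp.{u}) (a : U.V), ∃ C : ℝ, ∀ φ : U.V → ℝ, IsState U φ → |φ a| ≤ C := by
    intro U a
    obtain ⟨n, hn⟩ := U.u_strong |a|
    refine ⟨n, fun φ hφ => ?_⟩
    calc |φ a| = φ |a| := (hφ.abs a).symm
    _ ≤ φ (n • U.u) := hφ.mono hn
    _ = n * φ U.u := hφ.nsmul n U.u
    _ = n := by rw [hφ.2.2.2.2, mul_one]
  let fA : A.V → (BoundedContinuousFunction Pt ℝ) := fun a =>
    BoundedContinuousFunction.ofNormedAddCommGroup (fun p => p.1.1 a)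
      continuous_of_discreteTopology (Classical.choose (bnd A a))
      (fun p => by simpa using Classical.choose_spec (bnd A a) p.1.1 p.2.1)
  let fB : B.V → (BoundedContinuousFunction Pt ℝ) := fun b =>
    BoundedContinuousFunction.ofNormedAddCommGroup (fun p => p.1.2 b)
      continuous_of_discreteTopology (Classical.choose (bnd B b))
      (fun p => by simpa using Classical.choose_spec (bnd B b) p.1.2 p.2.2.1)
  have fA_apply : ∀ (a : A.V) (p : Pt), fA a p = p.1.1 a := fun a p => rfl
  have fB_apply : ∀ (b : B.V) (p : Pt), fB b p = p.1.2 b := fun b p => rfl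
  let E : RieszSp.{u} :=
    { V := BoundedContinuousFunction Pt ℝ
      add_le_add := fun a b c h => bcf_le_iff.mpr (fun p => by
        have h1 : a p ≤ b p := bcf_le_iff.mp h p
        show c p + a p ≤ c p + b p
        linarith)
      smul_nonneg := fun α x hα hx => bcf_le_iff.mpr (fun p => by
        have h1 : (0:ℝ) ≤ x p := bcf_le_iff.mp hx p
        show (0:ℝ) ≤ α * x p
        exact mul_nonneg hα h1)
      u := 1
      u_nonneg := bcf_le_iff.mpr (fun p => by
        show (0:ℝ) ≤ 1
        exact zero_le_one)
      u_strong := fun f => by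
        refine ⟨⌈‖f‖⌉₊, bcf_le_iff.mpr fun p => ?_⟩
        have h1 : f p ≤ ‖f‖ := le_trans (le_abs_self _) (f.norm_coe_le_norm p)
        show f p ≤ (⌈‖f‖⌉₊ : ℕ) • (1:ℝ)
        rw [nsmul_eq_mul, mul_one]
        exact le_trans h1 (Nat.le_ceil _) }
  refine ⟨E, fA, fB, ?_, ?_, ?_, ?_, ?_, ?_⟩
  · -- Archimedean
    intro f g h
    refine bcf_le_iff.mpr fun p => ?_
    show f p ≤ 0
    by_contra hc
    push_neg at hc
    obtain ⟨n, hn⟩ := Archimedean.arch (g p) hc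
    have h2 : (n + 1) • f p ≤ g p := by
      have h3 := bcf_le_iff.mp (h (n + 1)) p
      have h4 : ((n + 1) • f) p = (n + 1) • f p := by
        rfl
      rw [h4] at h3
      exact h3
    simp only [nsmul_eq_mul] at h2 hn
    push_cast at h2 hn
    nlinarith [hc]
  · -- RieszSpHom A E fA
    refine ⟨fun x y => ?_, fun α x => ?_, fun x y => ?_, fun x y => ?_, ?_⟩ <;>
      refine BoundedContinuousFunction.ext fun p => ?_
    · simp [fA_apply, p.2.1.1]; rfl
    · simp [fA_apply, p.2.1.2.1]; rfl
    · simp [fA_apply, p.2.1.2.2.1]; rfl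
    · simp [fA_apply, p.2.1.2.2.2.1]; rfl
    · simp [fA_apply, p.2.1.2.2.2.2]; rfl
  · -- RieszSpHom B E fB
    refine ⟨fun x y => ?_, fun α x => ?_, fun x y => ?_, fun x y => ?_, ?_⟩ <;>
      refine BoundedContinuousFunction.ext fun p => ?_
    · simp [fB_apply, p.2.2.1.1]; rfl
    · simp [fB_apply, p.2.2.1.2.1]; rfl
    · simp [fB_apply, p.2.2.1.2.2.1]; rfl
    · simp [fB_apply, p.2.2.1.2.2.2.1]; rfl
    · simp [fB_apply, p.2.2.1.2.2.2.2]; rfl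
  · -- injectivity of fA
    intro a a' h
    by_contra hne
    have hsub : a - a' ≠ 0 := sub_ne_zero.mpr hne
    obtain ⟨φ, hφ, hφne⟩ := exists_sep_state hA hsub
    obtain ⟨ψ, hψ, hext⟩ := exists_ext_state zB hzB hiB (hφ.comp hzA)
    let p : Pt := ⟨(φ, ψ), hφ, hψ, fun z => (hext z).symm⟩
    have hval : φ a = φ a' := by
      have := congrArg (fun f : BoundedContinuousFunction Pt ℝ => f p) h
      simpa [fA_apply] using this
    apply hφne
    have : φ (a - a') = φ a - φ a' := by
      rw [sub_eq_add_neg, hφ.1, hφ.neg]; ring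
    rw [this, hval, sub_self]
  · -- injectivity of fB
    intro b b' h
    by_contra hne
    have hsub : b - b' ≠ 0 := sub_ne_zero.mpr hne
    obtain ⟨ψ, hψ, hψne⟩ := exists_sep_state hB hsub
    obtain ⟨φ, hφ, hext⟩ := exists_ext_state zA hzA hiA (hψ.comp hzB)
    let p : Pt := ⟨(φ, ψ), hφ, hψ, fun z => hext z⟩
    have hval : ψ b = ψ b' := by
      have := congrArg (fun f : BoundedContinuousFunction Pt ℝ => f p) h
      simpa [fB_apply] using this
    apply hψne
    have : ψ (b - b') = ψ b - ψ b' := by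
      rw [sub_eq_add_neg, hψ.1, hψ.neg]; ring
    rw [this, hval, sub_self]
  · -- commutation
    funext z
    refine BoundedContinuousFunction.ext fun p => ?_
    simpa [fA_apply, fB_apply] using p.2.2.2 z
end

section
/- Let n ≥ 1 and let F be a semisimple MV-algebra with elements x₁, …, x_n that freely generate F: for every MV-algebra M and every m₁, …, m_n ∈ M there is a unique MV-algebra homomorphism F → M sending each x_i to m_i. If (T, ε) is a tensor PMV-algebra of F, then T is freely generated by ε(x₁), …, ε(x_n) in the class of unital commutative semisimple PMV-algebras: for every unital commutative semisimple PMV-algebra P and every p₁, …, p_n ∈ P there is a unique PMV-algebra homomorphism h : T → P with h(ε(x_i)) = p_i for each i. -/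
universe u v w

/-- An MV-algebra structure on the type `A`. -/
structure MVAlg (A : Type u) where
  oplus : A → A → A
  star : A → A
  zero : A
  oplus_comm : ∀ x y, oplus x y = oplus y x
  oplus_assoc : ∀ x y z, oplus (oplus x y) z = oplus x (oplus y z)
  oplus_zero : ∀ x, oplus x zero = x
  star_star : ∀ x, star (star x) = x
  oplus_one : ∀ x, oplus x (star zero) = star zero
  luk : ∀ x y, oplus (star (oplus (star x) y)) y = oplus (star (oplus (star y) x)) x

namespace MVAlg

variable {A : Type u}

/-- The top element `1 := 0*`. -/
def one (M : MVAlg A) : A := M.star M.zero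

/-- The underlying order: `x ≤ y` iff `x* ⊕ y = 1`. -/
def le (M : MVAlg A) (x y : A) : Prop := M.oplus (M.star x) y = M.one

/-- An ideal: contains `0`, closed under `⊕` and downward closed. -/
def IsIdeal (M : MVAlg A) (I : Set A) : Prop :=
  M.zero ∈ I ∧ (∀ x ∈ I, ∀ y ∈ I, M.oplus x y ∈ I) ∧ (∀ x y, M.le x y → y ∈ I → x ∈ I)

/-- A maximal proper ideal. -/
def IsMaximalIdeal (M : MVAlg A) (I : Set A) : Prop :=
  M.IsIdeal I ∧ I ≠ Set.univ ∧ ∀ J, M.IsIdeal J → J ≠ Set.univ → I ⊆ J → J = I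

/-- Semisimplicity: the intersection of all maximal proper ideals is `{0}`. -/
def Semisimple (M : MVAlg A) : Prop :=
  {x | ∀ I, M.IsMaximalIdeal I → x ∈ I} = {M.zero}

end MVAlg

/-- Homomorphisms of MV-algebras preserve `⊕`, `*` and `0`. -/
def MVHom {A : Type u} {B : Type v} (M : MVAlg A) (N : MVAlg B) (f : A → B) : Prop :=
  (∀ x y, f (M.oplus x y) = N.oplus (f x) (f y)) ∧
  (∀ x, f (M.star x) = N.star (f x)) ∧ f M.zero = N.zero

/-- A unital commutative PMV-algebra. -/
structure PMVAlg (A : Type u) extends MVAlg A where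
  mul : A → A → A
  mul_assoc : ∀ x y z, mul (mul x y) z = mul x (mul y z)
  mul_comm : ∀ x y, mul x y = mul y x
  mul_one : ∀ x, mul x toMVAlg.one = x
  mul_linear_right : ∀ x y z, toMVAlg.le y (toMVAlg.star z) →
    mul x (toMVAlg.oplus y z) = toMVAlg.oplus (mul x y) (mul x z)
  mul_linear_left : ∀ x y z, toMVAlg.le x (toMVAlg.star y) →
    mul (toMVAlg.oplus x y) z = toMVAlg.oplus (mul x z) (mul y z)

/-- Semisimplicity of a PMV-algebra is semisimplicity of its MV-reduct. -/
def PMVAlg.Semisimple {A : Type u} (P : PMVAlg A) : Prop := P.toMVAlg.Semisimple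

/-- Homomorphisms of PMV-algebras. -/
def PMVHom {A : Type u} {B : Type v} (P : PMVAlg A) (Q : PMVAlg B) (f : A → B) : Prop :=
  MVHom P.toMVAlg Q.toMVAlg f ∧ ∀ x y, f (P.mul x y) = Q.mul (f x) (f y)

/-- A Riesz MV-algebra: an MV-algebra with a scalar multiplication by elements of `[0,1]`. -/
structure RieszMVAlg (A : Type u) extends MVAlg A where
  smul : ℝ → A → A
  smul_oplus : ∀ α : ℝ, α ∈ Set.Icc (0:ℝ) 1 → ∀ x y, toMVAlg.le x (toMVAlg.star y) →
    smul α (toMVAlg.oplus x y) = toMVAlg.oplus (smul α x) (smul α y)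
  add_smul : ∀ α β : ℝ, α ∈ Set.Icc (0:ℝ) 1 → β ∈ Set.Icc (0:ℝ) 1 → α + β ≤ 1 → ∀ x,
    smul (α + β) x = toMVAlg.oplus (smul α x) (smul β x) ∧
    toMVAlg.le (smul α x) (toMVAlg.star (smul β x))
  mul_smul : ∀ α β : ℝ, α ∈ Set.Icc (0:ℝ) 1 → β ∈ Set.Icc (0:ℝ) 1 → ∀ x,
    smul (α * β) x = smul α (smul β x)
  one_smul : ∀ x, smul 1 x = x

/-- Semisimplicity of a Riesz MV-algebra. -/
def RieszMVAlg.Semisimple {A : Type u} (R : RieszMVAlg A) : Prop := R.toMVAlg.Semisimple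

/-- Homomorphisms of Riesz MV-algebras. -/
def RieszMVHom {A : Type u} {B : Type v} (R : RieszMVAlg A) (S : RieszMVAlg B) (f : A → B) : Prop :=
  MVHom R.toMVAlg S.toMVAlg f ∧
  ∀ α : ℝ, α ∈ Set.Icc (0:ℝ) 1 → ∀ x, f (R.smul α x) = S.smul α (f x)

/-- A unital commutative fMV-algebra. -/
structure FMVAlg (A : Type u) extends PMVAlg A, RieszMVAlg A where
  smul_mul_left : ∀ α : ℝ, α ∈ Set.Icc (0:ℝ) 1 → ∀ x y,
    smul α (mul x y) = mul (smul α x) y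
  smul_mul_right : ∀ α : ℝ, α ∈ Set.Icc (0:ℝ) 1 → ∀ x y,
    smul α (mul x y) = mul x (smul α y)

/-- Semisimplicity of an fMV-algebra. -/
def FMVAlg.Semisimple {A : Type u} (F : FMVAlg A) : Prop := F.toMVAlg.Semisimple

/-- Homomorphisms of fMV-algebras preserve `⊕`, `*`, `0`, `·` and scalar multiplication. -/
def FMVHom {A : Type u} {B : Type v} (F : FMVAlg A) (G : FMVAlg B) (f : A → B) : Prop :=
  MVHom F.toMVAlg G.toMVAlg f ∧
  (∀ x y, f (F.mul x y) = G.mul (f x) (f y)) ∧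
  (∀ α : ℝ, α ∈ Set.Icc (0:ℝ) 1 → ∀ x, f (F.smul α x) = G.smul α (f x))

/-- `(T, ε)` is a tensor PMV-algebra of the semisimple MV-algebra `M`. -/
def IsTensorPMV {A : Type u} (M : MVAlg A) {T : Type v} (P : PMVAlg T) (ε : A → T) : Prop :=
  P.Semisimple ∧ MVHom M P.toMVAlg ε ∧ Function.Injective ε ∧
  ∀ (B : Type w) (Q : PMVAlg B), Q.Semisimple → ∀ f : A → B, MVHom M Q.toMVAlg f →
    ∃! g : T → B, PMVHom P Q g ∧ g ∘ ε = f
/-! ### Development: basic MV-algebra arithmetic -/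

namespace MVAlg

variable {A : Type*} (M : MVAlg A)

/-- Łukasiewicz product. -/
def odot (a b : A) : A := M.star (M.oplus (M.star a) (M.star b))

/-- Truncated difference `a ⊖ b = a ⊙ b*`. -/
def msub (a b : A) : A := M.star (M.oplus (M.star a) b)

/-- Join. -/
def vee (a b : A) : A := M.oplus (M.star (M.oplus (M.star a) b)) b

/-- Meet. -/
def wedge (a b : A) : A := M.star (M.vee (M.star a) (M.star b))

/-- n-fold sum. -/
def nsm (M : MVAlg A) : ℕ → A → A
  | 0, _ => M.zero
  | n+1, a => M.oplus a (nsm M n a)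

variable {M}

lemma star_star' (a : A) : M.star (M.star a) = a := M.star_star a

lemma star_inj {a b : A} (h : M.star a = M.star b) : a = b := by
  have := congrArg M.star h; simpa [M.star_star] using this

lemma zero_oplus (a : A) : M.oplus M.zero a = a := by
  rw [M.oplus_comm]; exact M.oplus_zero a

lemma one_star : M.star M.one = M.zero := M.star_star _

lemma oplus_one' (a : A) : M.oplus a M.one = M.one := M.oplus_one a

lemma one_oplus (a : A) : M.oplus M.one a = M.one := by
  rw [M.oplus_comm]; exact M.oplus_one a

lemma msub_def (a b : A) : M.msub a b = M.odot a (M.star b) := by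
  simp [msub, odot, M.star_star]

lemma star_oplus_self (a : A) : M.oplus (M.star a) a = M.one := by
  have h := M.luk a M.one
  rw [show M.oplus (M.star a) M.one = M.one from M.oplus_one _] at h
  rw [show (M.star M.one) = M.zero from one_star] at h
  rw [zero_oplus, zero_oplus] at h
  exact h.symm

lemma oplus_left_comm (a b c : A) :
    M.oplus a (M.oplus b c) = M.oplus b (M.oplus a c) := by
  rw [← M.oplus_assoc, M.oplus_comm a b, M.oplus_assoc]

lemma oplus_star_self (a : A) : M.oplus a (M.star a) = M.one := by
  rw [M.oplus_comm]; exact star_oplus_self a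

lemma le_refl (a : A) : M.le a a := star_oplus_self a

lemma le_one (a : A) : M.le a M.one := oplus_one' _

lemma zero_le (a : A) : M.le M.zero a := by
  show M.oplus (M.star M.zero) a = M.one
  exact one_oplus a

lemma le_antisymm {a b : A} (hab : M.le a b) (hba : M.le b a) : a = b := by
  have h := M.luk a b
  rw [show M.oplus (M.star a) b = M.one from hab,
      show M.oplus (M.star b) a = M.one from hba, one_star, zero_oplus, zero_oplus] at h
  exact h.symm

lemma vee_eq (a b : A) : M.vee a b = M.oplus (M.msub a b) b := rfl

lemma vee_comm (a b : A) : M.vee a b = M.vee b a := M.luk a b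

lemma le_vee_left (a b : A) : M.le a (M.vee a b) := by
  show M.oplus (M.star a) (M.oplus (M.star (M.oplus (M.star a) b)) b) = M.one
  rw [oplus_left_comm]
  exact star_oplus_self _

lemma le_vee_right (a b : A) : M.le b (M.vee a b) := by
  show M.oplus (M.star b) (M.oplus (M.star (M.oplus (M.star a) b)) b) = M.one
  rw [oplus_left_comm, star_oplus_self, oplus_one']

lemma vee_eq_right {a b : A} (h : M.le a b) : M.vee a b = b := by
  show M.oplus (M.star (M.oplus (M.star a) b)) b = b
  rw [show M.oplus (M.star a) b = M.one from h, one_star, zero_oplus]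

lemma le_trans {a b c : A} (hab : M.le a b) (hbc : M.le b c) : M.le a c := by
  show M.oplus (M.star a) c = M.one
  have h1 : c = M.vee b c := (vee_eq_right hbc).symm
  rw [h1, vee_comm]
  show M.oplus (M.star a) (M.oplus (M.star (M.oplus (M.star c) b)) b) = M.one
  rw [oplus_left_comm, show M.oplus (M.star a) b = M.one from hab, oplus_one']

lemma le_decomp {a b : A} (h : M.le a b) : b = M.oplus a (M.msub b a) := by
  have hl := M.luk a b
  rw [show M.oplus (M.star a) b = M.one from h, one_star, zero_oplus] at hl
  show b = M.oplus a (M.star (M.oplus (M.star b) a))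
  rw [M.oplus_comm]; exact hl

lemma le_oplus_self (a c : A) : M.le a (M.oplus a c) := by
  show M.oplus (M.star a) (M.oplus a c) = M.one
  rw [← M.oplus_assoc, star_oplus_self, one_oplus]

lemma le_oplus_self' (a c : A) : M.le a (M.oplus c a) := by
  rw [M.oplus_comm]; exact le_oplus_self a c

lemma oplus_mono_left {a b : A} (c : A) (h : M.le a b) :
    M.le (M.oplus a c) (M.oplus b c) := by
  show M.oplus (M.star (M.oplus a c)) (M.oplus b c) = M.one
  rw [le_decomp h, M.oplus_comm a (M.msub b a), M.oplus_assoc,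
      oplus_left_comm, star_oplus_self, oplus_one']

lemma oplus_mono {a b c d : A} (h1 : M.le a b) (h2 : M.le c d) :
    M.le (M.oplus a c) (M.oplus b d) := by
  refine le_trans (oplus_mono_left c h1) ?_
  rw [M.oplus_comm b c, M.oplus_comm b d]
  exact oplus_mono_left b h2

lemma star_le {a b : A} (h : M.le a b) : M.le (M.star b) (M.star a) := by
  show M.oplus (M.star (M.star b)) (M.star a) = M.one
  rw [M.star_star, M.oplus_comm]; exact h

lemma star_le_iff {a b : A} : M.le (M.star b) (M.star a) ↔ M.le a b := by
  constructor
  · intro h; have := star_le h; rwa [M.star_star, M.star_star] at this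
  · exact star_le

lemma le_iff_msub_zero {a b : A} : M.le a b ↔ M.msub a b = M.zero := by
  constructor
  · intro h; show M.star (M.oplus (M.star a) b) = M.zero
    rw [show M.oplus (M.star a) b = M.one from h, one_star]
  · intro h
    show M.oplus (M.star a) b = M.star M.zero
    refine star_inj (M := M) ?_
    rw [M.star_star]
    exact h

lemma star_odot (a b : A) : M.star (M.odot a b) = M.oplus (M.star a) (M.star b) :=
  M.star_star _

lemma star_oplus (a b : A) : M.star (M.oplus a b) = M.odot (M.star a) (M.star b) := by
  show _ = M.star (M.oplus (M.star (M.star a)) (M.star (M.star b)))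
  rw [M.star_star, M.star_star]

lemma odot_comm (a b : A) : M.odot a b = M.odot b a := by
  show M.star _ = M.star _
  rw [M.oplus_comm]

lemma odot_assoc (a b c : A) : M.odot (M.odot a b) c = M.odot a (M.odot b c) := by
  show M.star (M.oplus (M.star (M.star (M.oplus (M.star a) (M.star b)))) (M.star c))
     = M.star (M.oplus (M.star a) (M.star (M.star (M.oplus (M.star b) (M.star c)))))
  rw [M.star_star, M.star_star, M.oplus_assoc]

lemma odot_le_left (a b : A) : M.le (M.odot a b) a := by
  show M.oplus (M.star (M.odot a b)) a = M.one
  rw [star_odot, M.oplus_assoc, M.oplus_comm (M.star b) a, ← M.oplus_assoc,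
      M.oplus_comm (M.star a) a, oplus_star_self, one_oplus]

lemma odot_le_right (a b : A) : M.le (M.odot a b) b := by
  rw [odot_comm]; exact odot_le_left b a

lemma one_odot (a : A) : M.odot M.one a = a := by
  show M.star (M.oplus (M.star M.one) (M.star a)) = a
  rw [one_star, zero_oplus, M.star_star]

lemma odot_one (a : A) : M.odot a M.one = a := by rw [odot_comm]; exact one_odot a

lemma zero_odot (a : A) : M.odot M.zero a = M.zero := by
  show M.star (M.oplus (M.star M.zero) (M.star a)) = M.zero
  rw [show M.oplus (M.star M.zero) (M.star a) = M.one from one_oplus _, one_star]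

lemma odot_zero (a : A) : M.odot a M.zero = M.zero := by rw [odot_comm]; exact zero_odot a

lemma odot_star_self (a : A) : M.odot a (M.star a) = M.zero := by
  show M.star (M.oplus (M.star a) (M.star (M.star a))) = M.zero
  rw [M.star_star, star_oplus_self, one_star]

lemma odot_mono_left {a b : A} (c : A) (h : M.le a b) :
    M.le (M.odot a c) (M.odot b c) := by
  have h2 := oplus_mono_left (M.star c) (star_le h)
  have h3 := star_le h2
  show M.le (M.star (M.oplus (M.star a) (M.star c))) (M.star (M.oplus (M.star b) (M.star c)))
  exact h3

lemma odot_mono {a b c d : A} (h1 : M.le a b) (h2 : M.le c d) :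
    M.le (M.odot a c) (M.odot b d) := by
  refine le_trans (odot_mono_left c h1) ?_
  rw [odot_comm b c, odot_comm b d]
  exact odot_mono_left b h2

lemma le_iff_odot_zero {a b : A} : M.le a b ↔ M.odot a (M.star b) = M.zero := by
  rw [le_iff_msub_zero, msub_def]

lemma oplus_odot_star_le (u v : A) : M.le (M.odot (M.oplus u v) (M.star u)) v := by
  show M.oplus (M.star (M.odot (M.oplus u v) (M.star u))) v = M.one
  rw [star_odot, M.star_star, M.oplus_assoc]
  exact star_oplus_self _

lemma le_oplus_odot (a b : A) : M.le a (M.oplus (M.star b) (M.odot a b)) := by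
  show M.oplus (M.star a) (M.oplus (M.star b) (M.odot a b)) = M.one
  rw [← M.oplus_assoc]
  show M.oplus (M.oplus (M.star a) (M.star b)) (M.star (M.oplus (M.star a) (M.star b))) = M.one
  exact oplus_star_self _

lemma resid {a b c : A} : M.le (M.odot a b) c ↔ M.le a (M.oplus (M.star b) c) := by
  constructor
  · intro h
    exact le_trans (le_oplus_odot a b) (oplus_mono (le_refl _) h)
  · intro h
    have h1 := odot_mono_left b h
    refine le_trans h1 ?_
    have h5 := oplus_odot_star_le (M := M) (M.star b) c
    rwa [M.star_star] at h5

lemma dual_resid {a b c : A} : M.le c (M.oplus a b) ↔ M.le (M.msub c b) a := by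
  rw [msub_def]
  constructor
  · intro h
    have h1 := odot_mono_left (M.star b) h
    refine le_trans h1 ?_
    rw [M.oplus_comm]
    exact oplus_odot_star_le b a
  · intro h
    have h1 : M.le c (M.vee c b) := le_vee_left c b
    rw [vee_eq, msub_def] at h1
    exact le_trans h1 (oplus_mono_left b h)

lemma wedge_le_left (a b : A) : M.le (M.wedge a b) a := by
  have h := le_vee_left (M := M) (M.star a) (M.star b)
  have h2 := star_le h
  rwa [M.star_star] at h2

lemma wedge_le_right (a b : A) : M.le (M.wedge a b) b := by
  have h := le_vee_right (M := M) (M.star a) (M.star b)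
  have h2 := star_le h
  rwa [M.star_star] at h2

lemma vee_le {a b c : A} (h1 : M.le a c) (h2 : M.le b c) : M.le (M.vee a b) c := by
  rw [vee_eq, msub_def]
  have h3 : M.le (M.odot a (M.star b)) (M.odot c (M.star b)) := odot_mono_left _ h1
  refine le_trans (oplus_mono_left b h3) ?_
  have h4 : M.vee c b = c := by rw [vee_comm]; exact vee_eq_right h2
  have h5 : M.le (M.vee c b) c := by rw [h4]; exact le_refl c
  rw [vee_eq, msub_def] at h5
  exact h5

lemma le_wedge {a b c : A} (h1 : M.le c a) (h2 : M.le c b) : M.le c (M.wedge a b) := by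
  have h := vee_le (star_le h1) (star_le h2)
  have h3 := star_le h
  rwa [M.star_star] at h3

lemma wedge_eq_left {a b : A} (h : M.le a b) : M.wedge a b = a :=
  le_antisymm (wedge_le_left a b) (le_wedge (le_refl a) h)

lemma wedge_eq_right {a b : A} (h : M.le b a) : M.wedge a b = b :=
  le_antisymm (wedge_le_right a b) (le_wedge h (le_refl b))

lemma wedge_form (a b : A) : M.wedge a b = M.odot (M.oplus a (M.star b)) b := by
  show M.star (M.oplus (M.star (M.oplus (M.star (M.star a)) (M.star b))) (M.star b))
     = M.star (M.oplus (M.star (M.oplus a (M.star b))) (M.star b))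
  rw [M.star_star]

lemma dr2 {c p q : A} (h1 : M.le c q) (h2 : M.le (M.oplus c (M.star q)) p) :
    M.le c (M.odot p q) := by
  have h3 : M.le (M.odot (M.oplus c (M.star q)) q) (M.odot p q) := odot_mono_left q h2
  have h4 : M.odot (M.oplus c (M.star q)) q = M.wedge c q := (wedge_form c q).symm
  rw [h4, wedge_eq_left h1] at h3
  exact h3

lemma canc {a b : A} (h : M.le b (M.star a)) : M.odot (M.oplus a b) (M.star a) = b := by
  refine le_antisymm (oplus_odot_star_le a b) ?_
  refine dr2 h ?_
  rw [M.star_star, M.oplus_comm]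
  exact le_refl _

lemma oplus_odot_le (p q r : A) :
    M.le (M.odot (M.oplus p q) r) (M.oplus p (M.odot q r)) := by
  rw [resid]
  rw [oplus_left_comm (M := M) (M.star r) p]
  exact oplus_mono (le_refl p) (le_oplus_odot q r)

lemma wedge_mono_right {b c : A} (a : A) (h : M.le b c) :
    M.le (M.wedge a b) (M.wedge a c) :=
  le_wedge (wedge_le_left a b) (le_trans (wedge_le_right a b) h)

/-- Riesz-style decomposition: `c ≤ z ⊕ w → c ≤ (z∧c) ⊕ (w∧c)`. -/
lemma le_wedge_oplus {c z w : A} (h : M.le c (M.oplus z w)) :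
    M.le c (M.oplus (M.wedge z c) (M.wedge w c)) := by
  have h1 : M.le (M.msub c w) (M.wedge z c) :=
    le_wedge (dual_resid.mp h) (by rw [msub_def]; exact odot_le_left c (M.star w))
  have h2 : M.le c (M.oplus (M.wedge z c) w) := dual_resid.mpr h1
  have h3 : M.le c (M.oplus w (M.wedge z c)) := by rwa [M.oplus_comm] at h2
  have h4 : M.le (M.msub c (M.wedge z c)) (M.wedge w c) :=
    le_wedge (dual_resid.mp h3) (by rw [msub_def]; exact odot_le_left c _)
  have h5 : M.le c (M.oplus (M.wedge w c) (M.wedge z c)) := dual_resid.mpr h4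
  rwa [M.oplus_comm] at h5

/-- Distributivity-type inequality. -/
lemma wedge_oplus_le (z w a : A) :
    M.le (M.wedge (M.oplus z w) a) (M.oplus (M.wedge z a) (M.wedge w a)) := by
  have h0 : M.le (M.wedge (M.oplus z w) a) (M.oplus z w) := wedge_le_left _ _
  have h1 := le_wedge_oplus h0
  have ha : M.le (M.wedge (M.oplus z w) a) a := wedge_le_right _ _
  refine le_trans h1 (oplus_mono ?_ ?_)
  · exact le_wedge (wedge_le_left _ _) (le_trans (wedge_le_right _ _) ha)
  · exact le_wedge (wedge_le_left _ _) (le_trans (wedge_le_right _ _) ha)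

lemma le_zero_eq {a : A} (h : M.le a M.zero) : a = M.zero :=
  le_antisymm h (zero_le a)

lemma nsm_succ (n : ℕ) (a : A) : M.nsm (n+1) a = M.oplus a (M.nsm n a) := rfl

lemma nsm_zero_arg (n : ℕ) : M.nsm n M.zero = M.zero := by
  induction n with
  | zero => rfl
  | succ k ih => rw [nsm_succ, ih, M.oplus_zero]

lemma nsm_one_val (a : A) : M.nsm 1 a = a := by
  rw [nsm_succ]; exact M.oplus_zero a

lemma nsm_two (a : A) : M.nsm 2 a = M.oplus a a := by
  rw [nsm_succ, nsm_one_val]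

lemma nsm_add (m n : ℕ) (a : A) :
    M.nsm (m + n) a = M.oplus (M.nsm m a) (M.nsm n a) := by
  induction m with
  | zero => simp only [Nat.zero_add]; rw [show M.nsm 0 a = M.zero from rfl, zero_oplus]
  | succ k ih =>
      have : k + 1 + n = (k + n) + 1 := by omega
      rw [this, nsm_succ, ih, nsm_succ, M.oplus_assoc]

lemma nsm_nsm (m k : ℕ) (a : A) : M.nsm m (M.nsm k a) = M.nsm (m * k) a := by
  induction m with
  | zero => rw [Nat.zero_mul]; rfl
  | succ j ih =>
      rw [nsm_succ, ih, show (j+1)*k = k + j*k by ring, nsm_add]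

lemma nsm_mono_right {a b : A} (n : ℕ) (h : M.le a b) :
    M.le (M.nsm n a) (M.nsm n b) := by
  induction n with
  | zero => exact le_refl _
  | succ k ih => exact oplus_mono h ih

lemma nsm_mono_left {m n : ℕ} (a : A) (h : m ≤ n) :
    M.le (M.nsm m a) (M.nsm n a) := by
  obtain ⟨k, rfl⟩ := Nat.exists_eq_add_of_le h
  rw [nsm_add]
  exact le_oplus_self _ _

lemma nsm_eq_one {n m : ℕ} {a : A} (h : M.nsm n a = M.one) (hnm : n ≤ m) :
    M.nsm m a = M.one :=
  le_antisymm (le_one _) (h ▸ nsm_mono_left a hnm)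

/-- `⊙` distributes over `∨`. -/
lemma odot_vee (p q r : A) :
    M.odot p (M.vee q r) = M.vee (M.odot p q) (M.odot p r) := by
  refine le_antisymm (M := M) ?_ ?_
  · rw [odot_comm, resid]
    refine vee_le ?_ ?_
    · refine le_trans (le_oplus_odot q p) ?_
      refine oplus_mono (le_refl _) ?_
      rw [odot_comm q p]
      exact le_vee_left _ _
    · refine le_trans (le_oplus_odot r p) ?_
      refine oplus_mono (le_refl _) ?_
      rw [odot_comm r p]
      exact le_vee_right _ _
  · refine vee_le ?_ ?_
    · exact odot_mono (le_refl p) (le_vee_left q r)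
    · exact odot_mono (le_refl p) (le_vee_right q r)

lemma vee_zero_left (a : A) : M.vee M.zero a = a := by
  show M.oplus (M.star (M.oplus (M.star M.zero) a)) a = a
  rw [show M.oplus (M.star M.zero) a = M.one from one_oplus a, one_star, zero_oplus]

/-- `(a ∨ b) → b = a → b`. -/
lemma vee_imp (a b : A) :
    M.oplus (M.star (M.vee a b)) b = M.oplus (M.star a) b := by
  refine le_antisymm (M := M) ?_ ?_
  · exact oplus_mono_left b (star_le (le_vee_left a b))
  · have h1 : M.le (M.odot (M.oplus (M.star a) b) (M.vee a b)) b := by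
      rw [odot_vee]
      refine vee_le ?_ ?_
      · exact resid.mpr (le_refl _)
      · exact odot_le_right _ _
    exact resid.mp h1

/-- Prelinearity: `(x → y) ∨ (y → x) = 1`. -/
lemma prelinear (x y : A) :
    M.vee (M.oplus (M.star x) y) (M.oplus (M.star y) x) = M.one := by
  set c := M.vee x y with hc
  set p := M.oplus (M.star x) y with hp
  set q := M.oplus (M.star y) x with hq
  have step1 : M.oplus (M.star c) y = p := vee_imp x y
  have step2 : M.oplus (M.star c) x = q := by
    rw [hc, vee_comm]; exact vee_imp y x
  have step3 : M.oplus (M.star p) q = q := by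
    rw [← step1, ← step2]
    rw [← M.oplus_assoc]
    have e1 : M.oplus (M.star (M.oplus (M.star c) y)) (M.star c)
        = M.star (M.odot (M.oplus (M.star c) y) c) := (star_odot _ _).symm
    have e2 : M.odot (M.oplus (M.star c) y) c = M.wedge y c := by
      rw [wedge_form, M.oplus_comm y (M.star c)]
    have e3 : M.wedge y c = y := wedge_eq_left (le_vee_right x y)
    rw [e1, e2, e3]
    exact step2.symm
  show M.oplus (M.star (M.oplus (M.star p) q)) q = M.one
  rw [step3]
  exact star_oplus_self q

lemma wedge_comm (a b : A) : M.wedge a b = M.wedge b a := by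
  show M.star _ = M.star _
  rw [vee_comm]

/-- The fundamental identity `(x ⊖ y) ∧ (y ⊖ x) = 0`. -/
lemma base_wedge (x y : A) : M.wedge (M.msub x y) (M.msub y x) = M.zero := by
  have h := prelinear (M := M) x y
  show M.star (M.vee (M.star (M.msub x y)) (M.star (M.msub y x))) = M.zero
  show M.star (M.vee (M.star (M.star (M.oplus (M.star x) y)))
      (M.star (M.star (M.oplus (M.star y) x)))) = M.zero
  rw [M.star_star, M.star_star, h, one_star]

lemma wedge_nsm_left {a b : A} (h : M.wedge a b = M.zero) (n : ℕ) :
    M.wedge (M.nsm n a) b = M.zero := by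
  induction n with
  | zero => exact wedge_eq_left (zero_le b)
  | succ k ih =>
      refine le_zero_eq ?_
      have h1 := wedge_oplus_le (M := M) a (M.nsm k a) b
      rw [h, ih] at h1
      rw [show M.oplus M.zero M.zero = M.zero from M.oplus_zero _] at h1
      exact h1

lemma wedge_nsm_nsm {a b : A} (h : M.wedge a b = M.zero) (n m : ℕ) :
    M.wedge (M.nsm n a) (M.nsm m b) = M.zero := by
  have h1 := wedge_nsm_left h n
  rw [wedge_comm] at h1
  have h2 := wedge_nsm_left h1 m
  rw [wedge_comm] at h2
  exact h2

lemma wedge_one_one : M.wedge M.one M.one = M.one := wedge_eq_left (le_refl _)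

lemma not_le_iff_msub_ne {x y : A} : ¬ M.le x y ↔ M.msub x y ≠ M.zero := by
  rw [le_iff_msub_zero]

/-- Archimedean + nontrivial implies linearly ordered. -/
lemma chainOfArch (harch : ∀ z : A, z ≠ M.zero → ∃ n, M.nsm n z = M.one)
    (hnt : M.zero ≠ M.one) (x y : A) : M.le x y ∨ M.le y x := by
  by_contra hcon
  push_neg at hcon
  obtain ⟨hx, hy⟩ := hcon
  obtain ⟨n, hn⟩ := harch _ (not_le_iff_msub_ne.mp hx)
  obtain ⟨m, hm⟩ := harch _ (not_le_iff_msub_ne.mp hy)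
  have hn' : M.nsm (max n m) (M.msub x y) = M.one := nsm_eq_one hn (Nat.le_max_left n m)
  have hm' : M.nsm (max n m) (M.msub y x) = M.one := nsm_eq_one hm (Nat.le_max_right n m)
  have hw := wedge_nsm_nsm (M := M) (base_wedge (M := M) x y) (max n m) (max n m)
  rw [hn', hm', wedge_one_one] at hw
  exact hnt hw.symm

variable (M) in
/-- One bisection step: doubling either by `⊕` or by `⊙`. -/
def dstep (b : Bool) (z : A) : A := if b then M.oplus z z else M.odot z z

variable (M) in
/-- Iterated bisection. -/
def dsit : List Bool → A → A
  | [], z => z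
  | b :: s, z => dsit s (M.dstep b z)

lemma dsit_cons (b : Bool) (s : List Bool) (z : A) :
    M.dsit (b :: s) z = M.dsit s (M.dstep b z) := rfl

/-- Exact doubling lemma. -/
lemma doubling {x y : A} (hxy : M.le x y) (hyy : M.odot y y = M.zero) :
    M.odot (M.oplus y y) (M.star (M.oplus x x))
      = M.oplus (M.msub y x) (M.msub y x) := by
  set u := M.msub y x with hu
  have f2 : y = M.oplus x u := le_decomp hxy
  have f1 : M.odot x u = M.zero := by
    rw [hu, msub_def, odot_comm y (M.star x), ← odot_assoc, odot_star_self, zero_odot]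
  have f3 : M.le y (M.star y) := by
    rw [show M.star y = M.star y from rfl]
    refine le_iff_odot_zero.mpr ?_
    rw [M.star_star]; exact hyy
  have huy : M.le u y := by rw [hu, msub_def]; exact odot_le_left y (M.star x)
  have f6 : M.le (M.oplus u y) (M.star x) := by
    have c1 : M.le x (M.star u) := by
      refine le_iff_odot_zero.mpr ?_
      rw [M.star_star]; exact f1
    have c2 : M.le (M.oplus x (M.star (M.star u))) (M.star y) := by
      rw [M.star_star, ← f2]; exact f3
    have c3 : M.le x (M.odot (M.star y) (M.star u)) := dr2 c1 c2
    have c4 : M.odot (M.star y) (M.star u) = M.star (M.oplus y u) := (star_oplus y u).symm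
    rw [c4] at c3
    have c5 := star_le c3
    rw [M.star_star] at c5
    rwa [M.oplus_comm] at c5
  have g2 : M.le (M.oplus u u) (M.star (M.oplus x x)) := by
    have i1 : M.le (M.oplus u u) (M.star x) :=
      le_trans (oplus_mono (le_refl u) huy) f6
    have i2 : M.le (M.oplus (M.oplus u u) (M.star (M.star x))) (M.star x) := by
      rw [M.star_star, M.oplus_assoc, M.oplus_comm u x, ← f2]
      exact f6
    have i3 := dr2 i1 i2
    rwa [show M.odot (M.star x) (M.star x) = M.star (M.oplus x x) from (star_oplus x x).symm] at i3
  have hyx : M.oplus y y = M.oplus (M.oplus x x) (M.oplus u u) := by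
    rw [f2, M.oplus_assoc, oplus_left_comm u x u, ← M.oplus_assoc]
  rw [hyx]
  exact canc g2

section Sep

variable (harch : ∀ z : A, z ≠ M.zero → ∃ n, M.nsm n z = M.one)
  (hnt : M.zero ≠ M.one)
  (hchain : ∀ x y : A, M.le x y ∨ M.le y x)

include harch hnt hchain in
lemma sep_main : ∀ (N : ℕ) (x y : A), M.nsm (2^N) (M.msub y x) = M.one →
    ∃ s : List Bool, M.dsit s x = M.zero ∧ M.dsit s y ≠ M.zero := by
  intro N
  induction N with
  | zero =>
      intro x y h
      rw [pow_zero, nsm_one_val] at h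
      rw [msub_def] at h
      have hy1 : y = M.one :=
        le_antisymm (le_one y) (h ▸ odot_le_left y (M.star x))
      have hx1 : M.star x = M.one :=
        le_antisymm (le_one _) (h ▸ odot_le_right y (M.star x))
      have hx0 : x = M.zero := by
        have := congrArg M.star hx1
        rwa [M.star_star, one_star] at this
      exact ⟨[], hx0, by rw [show M.dsit [] y = y from rfl, hy1]; exact fun hh => hnt hh.symm⟩
  | succ k ih =>
      intro x y h
      have hu : M.msub y x ≠ M.zero := by
        intro h0
        rw [h0, nsm_zero_arg] at h
        exact hnt h
      by_cases hx0 : x = M.zero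
      · refine ⟨[], hx0, ?_⟩
        intro hy0
        apply hu
        rw [msub_def, show y = M.zero from hy0, zero_odot]
      · have hxy : M.le x y := by
          rcases hchain x y with h1 | h1
          · exact h1
          · exact absurd (le_iff_msub_zero.mp h1) hu
        have hinv : M.nsm (2^k) (M.oplus (M.msub y x) (M.msub y x)) = M.one := by
          rw [← nsm_two, nsm_nsm]
          rw [show 2^k * 2 = 2^(k+1) from by rw [pow_succ]]
          exact h
        rcases hchain x (M.star x) with hca | hcb
        · -- x ⊙ x = 0
          have hxx : M.odot x x = M.zero := by
            have := le_iff_odot_zero.mp hca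
            rwa [M.star_star] at this
          by_cases hyy : M.odot y y = M.zero
          · -- recurse with ⊕-step
            have hdd := doubling hxy hyy
            have hmm : M.msub (M.oplus y y) (M.oplus x x)
                = M.oplus (M.msub y x) (M.msub y x) := by
              rw [msub_def]; exact hdd
            obtain ⟨s, hs1, hs2⟩ := ih (M.oplus x x) (M.oplus y y) (by rw [hmm]; exact hinv)
            refine ⟨true :: s, ?_, ?_⟩
            · rw [dsit_cons]; simpa [dstep] using hs1
            · rw [dsit_cons]; simpa [dstep] using hs2
          · -- done with one ⊙-step
            refine ⟨[false], ?_, ?_⟩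
            · rw [dsit_cons]; simpa [dstep, dsit] using hxx
            · rw [dsit_cons]; simpa [dstep, dsit] using hyy
        · -- x ⊕ x = 1 : recurse with ⊙-step
          have hxx1 : M.oplus x x = M.one := by
            refine le_antisymm (le_one _) ?_
            have h2 : M.le (M.oplus (M.star x) x) (M.oplus x x) := oplus_mono_left x hcb
            rwa [star_oplus_self] at h2
          have hxy' : M.le (M.star y) (M.star x) := star_le hxy
          have hyy' : M.odot (M.star x) (M.star x) = M.zero := by
            rw [show M.odot (M.star x) (M.star x) = M.star (M.oplus x x) from (star_oplus x x).symm,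
              hxx1, one_star]
          have hdd := doubling hxy' hyy'
          have hmsub : M.msub (M.star x) (M.star y) = M.msub y x := by
            show M.star (M.oplus (M.star (M.star x)) (M.star y)) = M.star (M.oplus (M.star y) x)
            rw [M.star_star, M.oplus_comm]
          rw [hmsub] at hdd
          have e2 : M.star (M.oplus (M.star x) (M.star x)) = M.odot x x := by
            rw [star_oplus, M.star_star]
          have e3 : M.odot (M.oplus (M.star x) (M.star x)) (M.star (M.oplus (M.star y) (M.star y)))
              = M.star (M.oplus (M.odot x x) (M.oplus (M.star y) (M.star y))) := by
            show M.star (M.oplus (M.star (M.oplus (M.star x) (M.star x)))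
                (M.star (M.star (M.oplus (M.star y) (M.star y))))) = _
            rw [e2, M.star_star]
          have hmm : M.msub (M.odot y y) (M.odot x x)
              = M.oplus (M.msub y x) (M.msub y x) := by
            rw [← hdd, e3]
            show M.star (M.oplus (M.star (M.odot y y)) (M.odot x x)) = _
            rw [star_odot, M.oplus_comm]
          obtain ⟨s, hs1, hs2⟩ := ih (M.odot x x) (M.odot y y) (by rw [hmm]; exact hinv)
          refine ⟨false :: s, ?_, ?_⟩
          · rw [dsit_cons]; simpa [dstep] using hs1
          · rw [dsit_cons]; simpa [dstep] using hs2

include harch hnt hchain in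
lemma sep_inj : Function.Injective
    (fun a : A => (fun s : List Bool => M.dsit s a ≠ M.zero)) := by
  have key : ∀ a b : A, ¬ M.le b a →
      (fun s : List Bool => M.dsit s a ≠ M.zero) ≠ (fun s => M.dsit s b ≠ M.zero) := by
    intro a b hnle hfun
    have hu : M.msub b a ≠ M.zero := not_le_iff_msub_ne.mp hnle
    obtain ⟨n, hn⟩ := harch _ hu
    have hn' : M.nsm (2^n) (M.msub b a) = M.one :=
      nsm_eq_one hn (Nat.le_of_lt (Nat.lt_two_pow_self (n := n)))
    obtain ⟨s, hs1, hs2⟩ := sep_main harch hnt hchain n a b hn'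
    have hcf := congrFun hfun s
    have : M.dsit s a ≠ M.zero := hcf.symm ▸ hs2
    exact this hs1
  intro a b hfun
  by_contra hne
  rcases hchain a b with h1 | h1
  · have : ¬ M.le b a := fun h2 => hne (le_antisymm h1 h2)
    exact key a b this hfun
  · have : ¬ M.le a b := fun h2 => hne (le_antisymm h2 h1)
    exact key b a this hfun.symm

end Sep

lemma ideal_univ_of_one_mem {I : Set A} (hI : M.IsIdeal I) (h1 : M.one ∈ I) :
    I = Set.univ := by
  ext z
  exact ⟨fun _ => trivial, fun _ => hI.2.2 z M.one (le_one z) h1⟩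

lemma nsm_mem_ideal {I : Set A} (hI : M.IsIdeal I) {a : A} (ha : a ∈ I) (n : ℕ) :
    M.nsm n a ∈ I := by
  induction n with
  | zero => exact hI.1
  | succ k ih => exact hI.2.1 a ha _ ih

lemma one_not_mem_of_proper {I : Set A} (hI : M.IsIdeal I) (hne : I ≠ Set.univ) :
    M.one ∉ I := fun h => hne (ideal_univ_of_one_mem hI h)

/-- Lemma A: if `I` is maximal and `a ∉ I` then `(n·a)* ∈ I` for some `n`. -/
lemma maximal_arch {I : Set A} (hI : M.IsMaximalIdeal I) {a : A} (ha : a ∉ I) :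
    ∃ n, M.star (M.nsm n a) ∈ I := by
  set U : Set A := {z | ∃ m ∈ I, ∃ n, M.le z (M.oplus m (M.nsm n a))} with hU
  have hUideal : M.IsIdeal U := by
    refine ⟨⟨M.zero, hI.1.1, 0, ?_⟩, ?_, ?_⟩
    · exact zero_le _
    · rintro z ⟨m1, hm1, n1, hz⟩ w ⟨m2, hm2, n2, hw⟩
      refine ⟨M.oplus m1 m2, hI.1.2.1 m1 hm1 m2 hm2, n1 + n2, ?_⟩
      refine le_trans (oplus_mono hz hw) ?_
      rw [nsm_add]
      rw [show M.oplus (M.oplus m1 (M.nsm n1 a)) (M.oplus m2 (M.nsm n2 a))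
          = M.oplus (M.oplus m1 m2) (M.oplus (M.nsm n1 a) (M.nsm n2 a)) from by
        rw [M.oplus_assoc, M.oplus_assoc, oplus_left_comm (M.nsm n1 a) m2]]
      exact le_refl _
    · rintro z w hzw ⟨m, hm, n, hw⟩
      exact ⟨m, hm, n, le_trans hzw hw⟩
  have hIU : I ⊆ U := by
    intro z hz
    refine ⟨z, hz, 0, ?_⟩
    rw [show M.nsm 0 a = M.zero from rfl, M.oplus_zero]
    exact le_refl _
  have haU : a ∈ U := by
    refine ⟨M.zero, hI.1.1, 1, ?_⟩
    rw [nsm_one_val, zero_oplus]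
    exact le_refl _
  have hUuniv : U = Set.univ := by
    by_contra hUu
    have := hI.2.2 U hUideal hUu hIU
    rw [this] at haU
    exact ha haU
  have h1U : M.one ∈ U := by rw [hUuniv]; trivial
  obtain ⟨m, hm, n, h1⟩ := h1U
  have heq : M.oplus m (M.nsm n a) = M.one := le_antisymm (le_one _) h1
  refine ⟨n, hI.1.2.2 _ m ?_ hm⟩
  show M.oplus (M.star (M.star (M.nsm n a))) m = M.one
  rw [M.star_star, M.oplus_comm]
  exact heq

/-- A subalgebra (as a closed subset). -/
structure Subalg (M : MVAlg A) where
  carrier : Set A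
  zero_mem : M.zero ∈ carrier
  oplus_mem : ∀ {a b : A}, a ∈ carrier → b ∈ carrier → M.oplus a b ∈ carrier
  star_mem : ∀ {a : A}, a ∈ carrier → M.star a ∈ carrier

variable {S : M.Subalg}

def Subalg.alg (S : M.Subalg) : MVAlg S.carrier where
  oplus a b := ⟨M.oplus a b, S.oplus_mem a.2 b.2⟩
  star a := ⟨M.star a, S.star_mem a.2⟩
  zero := ⟨M.zero, S.zero_mem⟩
  oplus_comm a b := Subtype.ext (M.oplus_comm _ _)
  oplus_assoc a b c := Subtype.ext (M.oplus_assoc _ _ _)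
  oplus_zero a := Subtype.ext (M.oplus_zero _)
  star_star a := Subtype.ext (M.star_star _)
  oplus_one a := Subtype.ext (M.oplus_one _)
  luk a b := Subtype.ext (M.luk _ _)

lemma Subalg.le_iff {a b : S.carrier} : S.alg.le a b ↔ M.le a.1 b.1 := by
  constructor
  · intro h; exact congrArg Subtype.val h
  · intro h; exact Subtype.ext h

lemma Subalg.nsm_val (n : ℕ) (a : S.carrier) :
    (S.alg.nsm n a).1 = M.nsm n a.1 := by
  induction n with
  | zero => rfl
  | succ k ih =>
      show (S.alg.oplus a (S.alg.nsm k a)).1 = M.oplus a.1 (M.nsm k a.1)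
      rw [← ih]; rfl

lemma Subalg.contraction {I : Set A} (hI : M.IsMaximalIdeal I) :
    S.alg.IsMaximalIdeal {a : S.carrier | a.1 ∈ I} := by
  have hid : S.alg.IsIdeal {a : S.carrier | a.1 ∈ I} := by
    refine ⟨hI.1.1, ?_, ?_⟩
    · intro a ha b hb; exact hI.1.2.1 a.1 ha b.1 hb
    · intro a b hab hb
      exact hI.1.2.2 a.1 b.1 (Subalg.le_iff.mp hab) hb
  refine ⟨hid, ?_, ?_⟩
  · intro hJu
    have h1 : (S.alg.one) ∈ {a : S.carrier | a.1 ∈ I} := by rw [hJu]; trivial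
    have : M.one ∈ I := h1
    exact one_not_mem_of_proper hI.1 hI.2.1 this
  · intro J hJ hJu hsub
    refine Set.Subset.antisymm ?_ hsub
    intro b hb
    by_contra hbI
    obtain ⟨n, hn⟩ := maximal_arch hI (a := b.1) hbI
    have hw : (S.alg.star (S.alg.nsm n b)) ∈ {a : S.carrier | a.1 ∈ I} := by
      show M.star ((S.alg.nsm n b).1) ∈ I
      rw [Subalg.nsm_val]
      exact hn
    have hwJ : S.alg.star (S.alg.nsm n b) ∈ J := hsub hw
    have hnb : S.alg.nsm n b ∈ J := nsm_mem_ideal hJ hb n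
    have hone : S.alg.one ∈ J := by
      have := hJ.2.1 _ hnb _ hwJ
      rwa [oplus_star_self] at this
    exact one_not_mem_of_proper hJ hJu hone

lemma Subalg.semisimple (hss : M.Semisimple) : S.alg.Semisimple := by
  ext a
  simp only [Set.mem_setOf_eq, Set.mem_singleton_iff]
  constructor
  · intro ha
    have hval : a.1 ∈ {z | ∀ I, M.IsMaximalIdeal I → z ∈ I} := by
      intro I hI
      exact ha _ (Subalg.contraction hI)
    rw [hss] at hval
    exact Subtype.ext hval
  · intro ha I hI
    rw [ha]
    exact hI.1.1

end MVAlg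
namespace PMVAlg

open MVAlg

variable {B : Type*} (P : PMVAlg B)

lemma mul_mono_right {u v : B} (a : B) (h : P.toMVAlg.le u v) :
    P.toMVAlg.le (P.mul a u) (P.mul a v) := by
  set w := P.toMVAlg.msub v u with hw
  have h1 : P.toMVAlg.le w (P.toMVAlg.star u) := by
    rw [hw, msub_def]; exact odot_le_right _ _
  have h2 : P.toMVAlg.le u (P.toMVAlg.star w) := by
    have := star_le h1
    rwa [star_star'] at this
  have hv : v = P.toMVAlg.oplus u w := le_decomp h
  rw [hv, P.mul_linear_right a u w h2]
  exact le_oplus_self _ _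

lemma mul_le_base (a c : B) : P.toMVAlg.le (P.mul a c) a := by
  have := P.mul_mono_right (v := P.toMVAlg.one) a (le_one c)
  rwa [P.mul_one] at this

lemma mul_mono_left {u v : B} (c : B) (h : P.toMVAlg.le u v) :
    P.toMVAlg.le (P.mul u c) (P.mul v c) := by
  have := P.mul_mono_right c h
  rwa [P.mul_comm c u, P.mul_comm c v] at this

/-- A PMV-subalgebra (as a closed subset). -/
structure PSub (P : PMVAlg B) where
  carrier : Set B
  zero_mem : P.toMVAlg.zero ∈ carrier
  oplus_mem : ∀ {a b : B}, a ∈ carrier → b ∈ carrier → P.toMVAlg.oplus a b ∈ carrier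
  star_mem : ∀ {a : B}, a ∈ carrier → P.toMVAlg.star a ∈ carrier
  mul_mem : ∀ {a b : B}, a ∈ carrier → b ∈ carrier → P.mul a b ∈ carrier

def PSub.toSub {P : PMVAlg B} (S : P.PSub) : P.toMVAlg.Subalg :=
  ⟨S.carrier, S.zero_mem, S.oplus_mem, S.star_mem⟩

def PSub.alg {P : PMVAlg B} (S : P.PSub) : PMVAlg S.carrier where
  toMVAlg := S.toSub.alg
  mul a b := ⟨P.mul a b, S.mul_mem a.2 b.2⟩
  mul_assoc a b c := Subtype.ext (P.mul_assoc _ _ _)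
  mul_comm a b := Subtype.ext (P.mul_comm _ _)
  mul_one a := Subtype.ext (P.mul_one _)
  mul_linear_right x y z h :=
    Subtype.ext (P.mul_linear_right x.1 y.1 z.1 (MVAlg.Subalg.le_iff.mp h))
  mul_linear_left x y z h :=
    Subtype.ext (P.mul_linear_left x.1 y.1 z.1 (MVAlg.Subalg.le_iff.mp h))

lemma PSub.semisimple {S : P.PSub} (hss : P.Semisimple) : S.alg.Semisimple :=
  MVAlg.Subalg.semisimple (S := S.toSub) hss

end PMVAlg
namespace MVAlg

variable {A : Type*} {M : MVAlg A}

lemma msub_self (a : A) : M.msub a a = M.zero := le_iff_msub_zero.mp (le_refl a)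

lemma msub_triangle (a b c : A) :
    M.le (M.msub a c) (M.oplus (M.msub a b) (M.msub b c)) := by
  have h1 := le_vee_left (M := M) a b
  rw [vee_eq] at h1
  have h3 : M.le (M.odot a (M.star c)) (M.odot (M.oplus (M.msub a b) b) (M.star c)) :=
    odot_mono_left _ h1
  have h4 : M.le (M.odot (M.oplus (M.msub a b) b) (M.star c))
      (M.oplus (M.msub a b) (M.odot b (M.star c))) := oplus_odot_le _ _ _
  rw [msub_def a c, msub_def b c]
  exact le_trans h3 h4

lemma msub_star_star (a b : A) : M.msub (M.star a) (M.star b) = M.msub b a := by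
  show M.star (M.oplus (M.star (M.star a)) (M.star b)) = M.star (M.oplus (M.star b) a)
  rw [M.star_star, M.oplus_comm]

lemma msub_oplus_le (a b c : A) :
    M.le (M.msub (M.oplus a c) (M.oplus b c)) (M.msub a b) := by
  have h1 := le_vee_left (M := M) a b
  rw [vee_eq] at h1
  have h2 : M.le (M.oplus a c) (M.oplus (M.oplus b c) (M.msub a b)) := by
    have e : M.oplus (M.oplus (M.msub a b) b) c = M.oplus (M.oplus b c) (M.msub a b) := by
      rw [M.oplus_assoc, M.oplus_comm]
    exact e ▸ oplus_mono_left c h1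
  rw [msub_def]
  refine le_trans (odot_mono_left _ h2) ?_
  exact oplus_odot_star_le _ _

lemma star_wedge (a b : A) :
    M.star (M.wedge a b) = M.vee (M.star a) (M.star b) := M.star_star _

lemma wedge_msub_mem {I : Set A} (hI : M.IsIdeal I) {b c : A}
    (h : M.odot b c ∈ I) : M.msub b (M.wedge b (M.star c)) ∈ I := by
  have e1 : M.msub b (M.wedge b (M.star c)) = M.odot b c := by
    rw [msub_def, star_wedge, M.star_star, odot_vee, odot_star_self, vee_zero_left]
  rw [e1]; exact h

end MVAlg

namespace PMVAlg

open MVAlg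

variable {B : Type*} (P : PMVAlg B)

lemma msub_mul_le (a b c : B) :
    P.toMVAlg.le (P.toMVAlg.msub (P.mul a c) (P.mul b c)) (P.toMVAlg.msub a b) := by
  set w := P.toMVAlg.msub a b with hw
  have hbw : P.toMVAlg.le b (P.toMVAlg.star w) := by
    have h1 : P.toMVAlg.le w (P.toMVAlg.star b) := by
      rw [hw, msub_def]; exact odot_le_right _ _
    have := star_le h1
    rwa [star_star'] at this
  have h2 : P.toMVAlg.le a (P.toMVAlg.oplus b w) := by
    have h1 := le_vee_left (M := P.toMVAlg) a b
    rw [vee_eq] at h1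
    rwa [P.toMVAlg.oplus_comm]
  have h3 : P.toMVAlg.le (P.mul a c) (P.toMVAlg.oplus (P.mul b c) (P.mul w c)) := by
    refine le_trans (P.mul_mono_left c h2) ?_
    rw [P.mul_linear_left b w c hbw]
    exact le_refl _
  rw [msub_def]
  refine le_trans (odot_mono_left _ h3) ?_
  refine le_trans (oplus_odot_star_le _ _) ?_
  have := P.mul_mono_right (v := P.toMVAlg.one) w (le_one c)
  rwa [P.mul_one] at this

section Quot

variable (I : Set B) (hI : P.toMVAlg.IsIdeal I)

/-- Symmetric distance. -/
def qd (a b : B) : B := P.toMVAlg.oplus (P.toMVAlg.msub a b) (P.toMVAlg.msub b a)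

/-- Congruence modulo the ideal `I`. -/
def qrel (a b : B) : Prop := P.qd a b ∈ I

variable {P I}

lemma qd_comm (a b : B) : P.qd a b = P.qd b a := P.toMVAlg.oplus_comm _ _

include hI in
lemma qrel_refl (a : B) : P.qrel I a a := by
  show P.toMVAlg.oplus (P.toMVAlg.msub a a) (P.toMVAlg.msub a a) ∈ I
  rw [msub_self, P.toMVAlg.oplus_zero]
  exact hI.1

lemma qrel_symm {a b : B} (h : P.qrel I a b) : P.qrel I b a := by
  show P.qd b a ∈ I
  rw [qd_comm]; exact h

include hI in
lemma qrel_trans {a b c : B} (h1 : P.qrel I a b) (h2 : P.qrel I b c) : P.qrel I a c := by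
  have tri : P.toMVAlg.le (P.qd a c) (P.toMVAlg.oplus (P.qd a b) (P.qd b c)) := by
    refine le_trans (oplus_mono (msub_triangle a b c) (msub_triangle c b a)) ?_
    show P.toMVAlg.le _ (P.toMVAlg.oplus
        (P.toMVAlg.oplus (P.toMVAlg.msub a b) (P.toMVAlg.msub b a))
        (P.toMVAlg.oplus (P.toMVAlg.msub b c) (P.toMVAlg.msub c b)))
    rw [P.toMVAlg.oplus_assoc, P.toMVAlg.oplus_assoc,
      P.toMVAlg.oplus_comm (P.toMVAlg.msub c b) (P.toMVAlg.msub b a),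
      oplus_left_comm (M := P.toMVAlg) (P.toMVAlg.msub b c) (P.toMVAlg.msub b a)]
    exact le_refl _
  exact hI.2.2 _ _ tri (hI.2.1 _ h1 _ h2)

include hI in
lemma qrel_oplus_right {a b : B} (c : B) (h : P.qrel I a b) :
    P.qrel I (P.toMVAlg.oplus a c) (P.toMVAlg.oplus b c) := by
  refine hI.2.2 _ _ (oplus_mono (msub_oplus_le a b c) (msub_oplus_le b a c)) h

include hI in
lemma qrel_oplus {a b c d : B} (h1 : P.qrel I a b) (h2 : P.qrel I c d) :
    P.qrel I (P.toMVAlg.oplus a c) (P.toMVAlg.oplus b d) := by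
  refine qrel_trans hI (qrel_oplus_right hI c h1) ?_
  rw [P.toMVAlg.oplus_comm b c, P.toMVAlg.oplus_comm b d]
  exact qrel_oplus_right hI b h2

lemma qrel_star {a b : B} (h : P.qrel I a b) :
    P.qrel I (P.toMVAlg.star a) (P.toMVAlg.star b) := by
  show P.toMVAlg.oplus _ _ ∈ I
  rw [msub_star_star, msub_star_star]
  exact qrel_symm h

include hI in
lemma qrel_mul_right {a b : B} (c : B) (h : P.qrel I a b) :
    P.qrel I (P.mul a c) (P.mul b c) := by
  refine hI.2.2 _ _ (oplus_mono (P.msub_mul_le a b c) (P.msub_mul_le b a c)) h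

include hI in
lemma qrel_mul {a b c d : B} (h1 : P.qrel I a b) (h2 : P.qrel I c d) :
    P.qrel I (P.mul a c) (P.mul b d) := by
  refine qrel_trans hI (qrel_mul_right hI c h1) ?_
  rw [P.mul_comm b c, P.mul_comm b d]
  exact qrel_mul_right hI b h2

variable (P I)

def qsetoid (hI : P.toMVAlg.IsIdeal I) : Setoid B :=
  ⟨P.qrel I, qrel_refl hI, qrel_symm, qrel_trans hI⟩

end Quot

end PMVAlg
namespace PMVAlg

open MVAlg

variable {B : Type*} (P : PMVAlg B) (I : Set B) (hI : P.toMVAlg.IsIdeal I)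

lemma qrel_one_iff {w : B} :
    P.qrel I w P.toMVAlg.one ↔ P.toMVAlg.star w ∈ I := by
  have e : P.qd w P.toMVAlg.one = P.toMVAlg.star w := by
    show P.toMVAlg.oplus (P.toMVAlg.msub w P.toMVAlg.one)
      (P.toMVAlg.msub P.toMVAlg.one w) = P.toMVAlg.star w
    rw [show P.toMVAlg.msub w P.toMVAlg.one = P.toMVAlg.zero from by
        show P.toMVAlg.star (P.toMVAlg.oplus (P.toMVAlg.star w) P.toMVAlg.one) = _
        rw [oplus_one', one_star],
      show P.toMVAlg.msub P.toMVAlg.one w = P.toMVAlg.star w from by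
        show P.toMVAlg.star (P.toMVAlg.oplus (P.toMVAlg.star P.toMVAlg.one) w) = _
        rw [one_star, zero_oplus],
      zero_oplus]
  show P.qd w P.toMVAlg.one ∈ I ↔ _
  rw [e]

variable {P I} in
lemma qrel_wedge (hI : P.toMVAlg.IsIdeal I) {b c : B} (h : P.toMVAlg.odot b c ∈ I) :
    P.qrel I b (P.toMVAlg.wedge b (P.toMVAlg.star c)) := by
  show P.qd b _ ∈ I
  have e0 : P.toMVAlg.msub (P.toMVAlg.wedge b (P.toMVAlg.star c)) b = P.toMVAlg.zero :=
    le_iff_msub_zero.mp (wedge_le_left _ _)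
  show P.toMVAlg.oplus _ _ ∈ I
  rw [e0, P.toMVAlg.oplus_zero]
  exact wedge_msub_mem hI h

/-- The quotient PMV-algebra. -/
def qalg : PMVAlg (Quotient (P.qsetoid I hI)) where
  oplus := Quotient.map₂ P.toMVAlg.oplus (fun _ _ h1 _ _ h2 => qrel_oplus hI h1 h2)
  star := Quotient.map P.toMVAlg.star (fun _ _ h => qrel_star h)
  zero := Quotient.mk _ P.toMVAlg.zero
  oplus_comm := by
    rintro ⟨a⟩ ⟨b⟩
    exact congrArg (Quotient.mk _) (P.toMVAlg.oplus_comm a b)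
  oplus_assoc := by
    rintro ⟨a⟩ ⟨b⟩ ⟨c⟩
    exact congrArg (Quotient.mk _) (P.toMVAlg.oplus_assoc a b c)
  oplus_zero := by
    rintro ⟨a⟩
    exact congrArg (Quotient.mk _) (P.toMVAlg.oplus_zero a)
  star_star := by
    rintro ⟨a⟩
    exact congrArg (Quotient.mk _) (P.toMVAlg.star_star a)
  oplus_one := by
    rintro ⟨a⟩
    exact congrArg (Quotient.mk _) (P.toMVAlg.oplus_one a)
  luk := by
    rintro ⟨a⟩ ⟨b⟩
    exact congrArg (Quotient.mk _) (P.toMVAlg.luk a b)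
  mul := Quotient.map₂ P.mul (fun _ _ h1 _ _ h2 => qrel_mul hI h1 h2)
  mul_assoc := by
    rintro ⟨a⟩ ⟨b⟩ ⟨c⟩
    exact congrArg (Quotient.mk _) (P.mul_assoc a b c)
  mul_comm := by
    rintro ⟨a⟩ ⟨b⟩
    exact congrArg (Quotient.mk _) (P.mul_comm a b)
  mul_one := by
    rintro ⟨a⟩
    exact congrArg (Quotient.mk _) (P.mul_one a)
  mul_linear_right := by
    rintro ⟨a⟩ ⟨b⟩ ⟨c⟩ h
    have hbc : P.toMVAlg.odot b c ∈ I := (qrel_one_iff P I).mp (Quotient.exact h)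
    set b' := P.toMVAlg.wedge b (P.toMVAlg.star c) with hb'
    have hw : P.qrel I b b' := qrel_wedge hI hbc
    refine Quotient.sound ?_
    have h1 : P.qrel I (P.mul a (P.toMVAlg.oplus b c)) (P.mul a (P.toMVAlg.oplus b' c)) :=
      qrel_mul hI (qrel_refl hI a) (qrel_oplus hI hw (qrel_refl hI c))
    have h2 : P.mul a (P.toMVAlg.oplus b' c)
        = P.toMVAlg.oplus (P.mul a b') (P.mul a c) :=
      P.mul_linear_right a b' c (wedge_le_right _ _)
    have h3 : P.qrel I (P.toMVAlg.oplus (P.mul a b') (P.mul a c))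
        (P.toMVAlg.oplus (P.mul a b) (P.mul a c)) :=
      qrel_oplus hI (qrel_mul hI (qrel_refl hI a) (qrel_symm hw)) (qrel_refl hI _)
    exact qrel_trans hI (h2 ▸ h1) h3
  mul_linear_left := by
    rintro ⟨a⟩ ⟨b⟩ ⟨c⟩ h
    have hab : P.toMVAlg.odot a b ∈ I := (qrel_one_iff P I).mp (Quotient.exact h)
    set a' := P.toMVAlg.wedge a (P.toMVAlg.star b) with ha'
    have hw : P.qrel I a a' := qrel_wedge hI hab
    refine Quotient.sound ?_
    have h1 : P.qrel I (P.mul (P.toMVAlg.oplus a b) c) (P.mul (P.toMVAlg.oplus a' b) c) :=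
      qrel_mul hI (qrel_oplus hI hw (qrel_refl hI b)) (qrel_refl hI c)
    have h2 : P.mul (P.toMVAlg.oplus a' b) c
        = P.toMVAlg.oplus (P.mul a' c) (P.mul b c) :=
      P.mul_linear_left a' b c (wedge_le_right _ _)
    have h3 : P.qrel I (P.toMVAlg.oplus (P.mul a' c) (P.mul b c))
        (P.toMVAlg.oplus (P.mul a c) (P.mul b c)) :=
      qrel_oplus hI (qrel_mul hI (qrel_symm hw) (qrel_refl hI c)) (qrel_refl hI _)
    exact qrel_trans hI (h2 ▸ h1) h3

end PMVAlg
namespace PMVAlg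

open MVAlg

variable {B : Type*} (P : PMVAlg B) (I : Set B) (hI : P.toMVAlg.IsIdeal I)

lemma qalg_mk_oplus (a b : B) :
    (P.qalg I hI).toMVAlg.oplus (Quotient.mk _ a) (Quotient.mk _ b)
      = Quotient.mk _ (P.toMVAlg.oplus a b) := rfl

lemma qalg_mk_star (a : B) :
    (P.qalg I hI).toMVAlg.star (Quotient.mk _ a) = Quotient.mk _ (P.toMVAlg.star a) := rfl

lemma qalg_mk_mul (a b : B) :
    (P.qalg I hI).mul (Quotient.mk _ a) (Quotient.mk _ b)
      = Quotient.mk _ (P.mul a b) := rfl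

lemma qalg_mk_hom : MVHom P.toMVAlg (P.qalg I hI).toMVAlg (Quotient.mk _) :=
  ⟨fun _ _ => rfl, fun _ => rfl, rfl⟩

lemma qalg_mk_le {a b : B} (h : P.toMVAlg.le a b) :
    (P.qalg I hI).toMVAlg.le (Quotient.mk _ a) (Quotient.mk _ b) :=
  congrArg (Quotient.mk _) h

lemma qd_zero (a : B) : P.qd a P.toMVAlg.zero = a := by
  show P.toMVAlg.oplus (P.toMVAlg.msub a P.toMVAlg.zero)
    (P.toMVAlg.msub P.toMVAlg.zero a) = a
  rw [show P.toMVAlg.msub a P.toMVAlg.zero = a from by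
      show P.toMVAlg.star (P.toMVAlg.oplus (P.toMVAlg.star a) P.toMVAlg.zero) = a
      rw [P.toMVAlg.oplus_zero, P.toMVAlg.star_star],
    show P.toMVAlg.msub P.toMVAlg.zero a = P.toMVAlg.zero from by
      show P.toMVAlg.star (P.toMVAlg.oplus (P.toMVAlg.star P.toMVAlg.zero) a) = _
      rw [show P.toMVAlg.oplus (P.toMVAlg.star P.toMVAlg.zero) a = P.toMVAlg.one from
        one_oplus a, one_star],
    P.toMVAlg.oplus_zero]

lemma qalg_mk_eq_zero_iff {a : B} :
    Quotient.mk (P.qsetoid I hI) a = (P.qalg I hI).toMVAlg.zero ↔ a ∈ I := by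
  constructor
  · intro h
    have h2 : P.qrel I a P.toMVAlg.zero := Quotient.exact h
    have h3 : P.qd a P.toMVAlg.zero ∈ I := h2
    rwa [qd_zero] at h3
  · intro h
    refine Quotient.sound ?_
    show P.qd a P.toMVAlg.zero ∈ I
    rw [qd_zero]
    exact h

lemma qalg_nsm (n : ℕ) (a : B) :
    (P.qalg I hI).toMVAlg.nsm n (Quotient.mk _ a) = Quotient.mk _ (P.toMVAlg.nsm n a) := by
  induction n with
  | zero => rfl
  | succ k ih =>
      show (P.qalg I hI).toMVAlg.oplus (Quotient.mk _ a) ((P.qalg I hI).toMVAlg.nsm k (Quotient.mk _ a))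
        = Quotient.mk _ (P.toMVAlg.oplus a (P.toMVAlg.nsm k a))
      rw [ih]
      exact qalg_mk_oplus P I hI a (P.toMVAlg.nsm k a)

variable {I}
variable (hImax : P.toMVAlg.IsMaximalIdeal I)

include hImax in
lemma q_one_ne_zero : (P.qalg I hImax.1).toMVAlg.zero ≠ (P.qalg I hImax.1).toMVAlg.one := by
  intro h
  have h2 : Quotient.mk (P.qsetoid I hImax.1) P.toMVAlg.one = (P.qalg I hImax.1).toMVAlg.zero :=
    h.symm
  have h3 : P.toMVAlg.one ∈ I := (qalg_mk_eq_zero_iff P I hImax.1).mp h2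
  exact one_not_mem_of_proper hImax.1 hImax.2.1 h3

include hImax in
lemma q_arch : ∀ q, q ≠ (P.qalg I hImax.1).toMVAlg.zero →
    ∃ n, (P.qalg I hImax.1).toMVAlg.nsm n q = (P.qalg I hImax.1).toMVAlg.one := by
  rintro ⟨a⟩ hne
  have ha : a ∉ I := fun h => hne ((qalg_mk_eq_zero_iff P I hImax.1).mpr h)
  obtain ⟨n, hn⟩ := maximal_arch hImax ha
  refine ⟨n, ?_⟩
  show ((P.qalg I hImax.1).toMVAlg.nsm n (Quotient.mk (P.qsetoid I hImax.1) a))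
      = (P.qalg I hImax.1).toMVAlg.one
  rw [qalg_nsm]
  refine star_inj (M := (P.qalg I hImax.1).toMVAlg) ?_
  rw [one_star (M := (P.qalg I hImax.1).toMVAlg)]
  rw [qalg_mk_star]
  exact (qalg_mk_eq_zero_iff P I hImax.1).mpr hn

include hImax in
lemma q_simple : ∀ K, (P.qalg I hImax.1).toMVAlg.IsIdeal K → K ≠ Set.univ →
    K = {(P.qalg I hImax.1).toMVAlg.zero} := by
  intro K hK hKu
  set J : Set B := {b | Quotient.mk (P.qsetoid I hImax.1) b ∈ K} with hJ
  have hJideal : P.toMVAlg.IsIdeal J := by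
    refine ⟨hK.1, ?_, ?_⟩
    · intro a ha b hb
      show (P.qalg I hImax.1).toMVAlg.oplus (Quotient.mk _ a) (Quotient.mk _ b) ∈ K
      exact hK.2.1 _ ha _ hb
    · intro a b hab hb
      exact hK.2.2 _ _ (qalg_mk_le P I hImax.1 hab) hb
  have hIJ : I ⊆ J := by
    intro a ha
    show Quotient.mk _ a ∈ K
    rw [(qalg_mk_eq_zero_iff P I hImax.1).mpr ha]
    exact hK.1
  have hJu : J ≠ Set.univ := by
    intro h
    have h1 : P.toMVAlg.one ∈ J := by rw [h]; trivial
    have h2 : (P.qalg I hImax.1).toMVAlg.one ∈ K := h1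
    exact hKu (ideal_univ_of_one_mem hK h2)
  have hJI : J = I := hImax.2.2 J hJideal hJu hIJ
  ext q
  constructor
  · intro hq
    obtain ⟨a, rfl⟩ := Quotient.exists_rep q
    have : a ∈ J := hq
    rw [hJI] at this
    exact (qalg_mk_eq_zero_iff P I hImax.1).mpr this
  · intro hq
    rw [Set.mem_singleton_iff] at hq
    rw [hq]
    exact hK.1

include hImax in
lemma q_ss : (P.qalg I hImax.1).Semisimple := by
  have hzmax : (P.qalg I hImax.1).toMVAlg.IsMaximalIdeal {(P.qalg I hImax.1).toMVAlg.zero} := by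
    refine ⟨⟨rfl, ?_, ?_⟩, ?_, ?_⟩
    · intro a ha b hb
      rw [Set.mem_singleton_iff] at ha hb
      rw [ha, hb, Set.mem_singleton_iff, (P.qalg I hImax.1).toMVAlg.oplus_zero]
    · intro a b hab hb
      rw [Set.mem_singleton_iff] at hb
      rw [hb] at hab
      exact le_zero_eq hab
    · intro h
      have h1 : (P.qalg I hImax.1).toMVAlg.one ∈ ({(P.qalg I hImax.1).toMVAlg.zero} :
          Set (Quotient (P.qsetoid I hImax.1))) := by rw [h]; trivial
      rw [Set.mem_singleton_iff] at h1
      exact q_one_ne_zero P hImax h1.symm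
    · intro K hK hKu _
      exact q_simple P hImax K hK hKu
  show (P.qalg I hImax.1).toMVAlg.Semisimple
  ext q
  simp only [Set.mem_setOf_eq, Set.mem_singleton_iff]
  constructor
  · intro hq
    have := hq _ hzmax
    rwa [Set.mem_singleton_iff] at this
  · intro hq K hK
    rw [hq]
    exact hK.1.1

include hImax in
lemma q_chain : ∀ x y, (P.qalg I hImax.1).toMVAlg.le x y ∨ (P.qalg I hImax.1).toMVAlg.le y x :=
  chainOfArch (q_arch P hImax) (q_one_ne_zero P hImax)

include hImax in
lemma q_inj : Function.Injective
    (fun q : Quotient (P.qsetoid I hImax.1) =>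
      (fun s : List Bool => (P.qalg I hImax.1).toMVAlg.dsit s q ≠ (P.qalg I hImax.1).toMVAlg.zero)) :=
  sep_inj (q_arch P hImax) (q_one_ne_zero P hImax) (q_chain P hImax)

end PMVAlg
/-- PMV-terms in `n` variables. -/
inductive PTermN (n : ℕ) : Type
  | zero : PTermN n
  | var (i : Fin n) : PTermN n
  | oplus (s t : PTermN n) : PTermN n
  | star (s : PTermN n) : PTermN n
  | mul (s t : PTermN n) : PTermN n

namespace PTermN

variable {n : ℕ}

def enc : PTermN n → ℕ
  | zero => Nat.pair 0 0
  | var i => Nat.pair 1 i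
  | oplus s t => Nat.pair 2 (Nat.pair (enc s) (enc t))
  | star s => Nat.pair 3 (enc s)
  | mul s t => Nat.pair 4 (Nat.pair (enc s) (enc t))

lemma enc_inj : ∀ s t : PTermN n, enc s = enc t → s = t := by
  intro s
  induction s with
  | zero => intro t h; cases t <;> simp [enc, Nat.pair_eq_pair] at h ⊢
  | var i =>
      intro t h; cases t <;> simp [enc, Nat.pair_eq_pair] at h ⊢
      exact Fin.ext h
  | oplus s1 s2 ih1 ih2 =>
      intro t h; cases t <;> simp [enc, Nat.pair_eq_pair] at h ⊢
      exact ⟨ih1 _ h.1, ih2 _ h.2⟩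
  | star s1 ih1 =>
      intro t h; cases t <;> simp [enc, Nat.pair_eq_pair] at h ⊢
      exact ih1 _ h
  | mul s1 s2 ih1 ih2 =>
      intro t h; cases t <;> simp [enc, Nat.pair_eq_pair] at h ⊢
      exact ⟨ih1 _ h.1, ih2 _ h.2⟩

instance : Countable (PTermN n) :=
  (countable_iff_exists_injective _).mpr ⟨enc, fun _ _ h => enc_inj _ _ h⟩

variable {B : Type*} (P : PMVAlg B) (v : Fin n → B)

def eval : PTermN n → B
  | zero => P.toMVAlg.zero
  | var i => v i
  | oplus s t => P.toMVAlg.oplus (eval s) (eval t)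
  | star s => P.toMVAlg.star (eval s)
  | mul s t => P.mul (eval s) (eval t)

/-- The PMV-subalgebra generated by finitely many elements. -/
def rangeSub : P.PSub where
  carrier := Set.range (eval P v)
  zero_mem := ⟨zero, rfl⟩
  oplus_mem := by rintro a b ⟨s, rfl⟩ ⟨t, rfl⟩; exact ⟨oplus s t, rfl⟩
  star_mem := by rintro a ⟨s, rfl⟩; exact ⟨star s, rfl⟩
  mul_mem := by rintro a b ⟨s, rfl⟩ ⟨t, rfl⟩; exact ⟨mul s t, rfl⟩

lemma var_mem (i : Fin n) : v i ∈ (rangeSub P v).carrier := ⟨var i, rfl⟩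

instance : Countable ((rangeSub P v).carrier : Set B) :=
  (Set.countable_range (eval P v)).to_subtype

end PTermN
namespace PMVAlg

open MVAlg

variable {B : Type*} {C : Type*} (P : PMVAlg B) (e : C ≃ B)

/-- Transport a PMV-algebra structure along an equivalence. -/
def transport : PMVAlg C where
  oplus a b := e.symm (P.toMVAlg.oplus (e a) (e b))
  star a := e.symm (P.toMVAlg.star (e a))
  zero := e.symm P.toMVAlg.zero
  oplus_comm a b := by
    apply e.injective
    simp only [MVAlg.one, Equiv.apply_symm_apply]
    exact P.toMVAlg.oplus_comm _ _
  oplus_assoc a b c := by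
    apply e.injective
    simp only [MVAlg.one, Equiv.apply_symm_apply]
    exact P.toMVAlg.oplus_assoc _ _ _
  oplus_zero a := by
    apply e.injective
    simp only [MVAlg.one, Equiv.apply_symm_apply]
    exact P.toMVAlg.oplus_zero _
  star_star a := by
    apply e.injective
    simp only [MVAlg.one, Equiv.apply_symm_apply]
    exact P.toMVAlg.star_star _
  oplus_one a := by
    apply e.injective
    simp only [MVAlg.one, Equiv.apply_symm_apply]
    exact P.toMVAlg.oplus_one _
  luk a b := by
    apply e.injective
    simp only [MVAlg.one, Equiv.apply_symm_apply]
    exact P.toMVAlg.luk _ _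
  mul a b := e.symm (P.mul (e a) (e b))
  mul_assoc a b c := by
    apply e.injective
    simp only [MVAlg.one, Equiv.apply_symm_apply]
    exact P.mul_assoc _ _ _
  mul_comm a b := by
    apply e.injective
    simp only [MVAlg.one, Equiv.apply_symm_apply]
    exact P.mul_comm _ _
  mul_one a := by
    apply e.injective
    simp only [MVAlg.one, Equiv.apply_symm_apply]
    exact P.mul_one _
  mul_linear_right x y z h := by
    have h2 : P.toMVAlg.le (e y) (P.toMVAlg.star (e z)) := by
      have h3 := congrArg e h
      simp only [MVAlg.one, Equiv.apply_symm_apply] at h3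
      exact h3
    apply e.injective
    simp only [MVAlg.one, Equiv.apply_symm_apply]
    exact P.mul_linear_right _ _ _ h2
  mul_linear_left x y z h := by
    have h2 : P.toMVAlg.le (e x) (P.toMVAlg.star (e y)) := by
      have h3 := congrArg e h
      simp only [MVAlg.one, Equiv.apply_symm_apply] at h3
      exact h3
    apply e.injective
    simp only [MVAlg.one, Equiv.apply_symm_apply]
    exact P.mul_linear_left _ _ _ h2

lemma transport_le {a b : C} :
    (P.transport e).toMVAlg.le a b ↔ P.toMVAlg.le (e a) (e b) := by
  constructor
  · intro h
    have h3 := congrArg e h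
    simp only [MVAlg.one, transport, Equiv.apply_symm_apply] at h3
    exact h3
  · intro h
    apply e.injective
    simp only [MVAlg.one, transport, Equiv.apply_symm_apply]
    exact h

lemma transport_hom : PMVHom (P.transport e) P e := by
  refine ⟨⟨?_, ?_, ?_⟩, ?_⟩
  · intro a b; simp [transport, Equiv.apply_symm_apply]
  · intro a; simp [transport, Equiv.apply_symm_apply]
  · simp [transport, Equiv.apply_symm_apply]
  · intro a b; simp [transport, Equiv.apply_symm_apply]

lemma transport_hom_symm : PMVHom P (P.transport e) e.symm := by
  refine ⟨⟨?_, ?_, ?_⟩, ?_⟩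
  · intro a b; simp [transport, Equiv.apply_symm_apply]
  · intro a; simp [transport, Equiv.apply_symm_apply]
  · simp [transport]
  · intro a b; simp [transport, Equiv.apply_symm_apply]

lemma transport_semisimple (hss : P.Semisimple) : (P.transport e).Semisimple := by
  show (P.transport e).toMVAlg.Semisimple
  have hmax : ∀ K : Set B, P.toMVAlg.IsMaximalIdeal K →
      (P.transport e).toMVAlg.IsMaximalIdeal (e ⁻¹' K) := by
    intro K hK
    refine ⟨⟨?_, ?_, ?_⟩, ?_, ?_⟩
    · show e ((P.transport e).toMVAlg.zero) ∈ K
      simp only [MVAlg.one, transport, Equiv.apply_symm_apply]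
      exact hK.1.1
    · intro a ha b hb
      show e ((P.transport e).toMVAlg.oplus a b) ∈ K
      simp only [MVAlg.one, transport, Equiv.apply_symm_apply]
      exact hK.1.2.1 _ ha _ hb
    · intro a b hab hb
      exact hK.1.2.2 (e a) (e b) ((transport_le P e).mp hab) hb
    · intro h
      have : K = Set.univ := by
        ext z
        refine ⟨fun _ => trivial, fun _ => ?_⟩
        have : e.symm z ∈ e ⁻¹' K := by rw [h]; trivial
        simpa using this
      exact hK.2.1 this
    · intro K' hK' hK'u hsub
      set L : Set B := e.symm ⁻¹' K' with hL
      have hLideal : P.toMVAlg.IsIdeal L := by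
        refine ⟨?_, ?_, ?_⟩
        · show e.symm P.toMVAlg.zero ∈ K'
          exact hK'.1
        · intro a ha b hb
          show e.symm (P.toMVAlg.oplus a b) ∈ K'
          have : e.symm (P.toMVAlg.oplus a b)
              = (P.transport e).toMVAlg.oplus (e.symm a) (e.symm b) := by
            simp [transport]
          rw [this]
          exact hK'.2.1 _ ha _ hb
        · intro a b hab hb
          refine hK'.2.2 (e.symm a) (e.symm b) ?_ hb
          rw [transport_le]
          simpa using hab
      have hLu : L ≠ Set.univ := by
        intro h
        apply hK'u
        ext z
        refine ⟨fun _ => trivial, fun _ => ?_⟩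
        have hz : e z ∈ L := by rw [h]; trivial
        have hz2 : e.symm (e z) ∈ K' := hz
        simpa using hz2
      have hKL : K ⊆ L := by
        intro u hu
        show e.symm u ∈ K'
        refine hsub ?_
        show e (e.symm u) ∈ K
        simpa using hu
      have : L = K := hK.2.2 L hLideal hLu hKL
      ext a
      constructor
      · intro ha
        show e a ∈ K
        rw [← this]
        show e.symm (e a) ∈ K'
        simpa using ha
      · intro ha
        have : e a ∈ L := this ▸ ha
        have h2 : e.symm (e a) ∈ K' := this
        simpa using h2
  ext a
  simp only [Set.mem_setOf_eq, Set.mem_singleton_iff]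
  constructor
  · intro ha
    have hval : e a ∈ {z | ∀ K, P.toMVAlg.IsMaximalIdeal K → z ∈ K} := by
      intro K hK
      exact ha _ (hmax K hK)
    rw [hss] at hval
    apply e.injective
    simp only [MVAlg.one, transport, Equiv.apply_symm_apply]
    exact hval
  · intro ha K hK
    rw [ha]
    exact hK.1.1

end PMVAlg
section Assembly

open MVAlg PMVAlg

lemma mvhom_comp {A : Type*} {B : Type*} {C : Type*} {M : MVAlg A} {N : MVAlg B}
    {O : MVAlg C} {f : A → B} {g : B → C} (hf : MVHom M N f) (hg : MVHom N O g) :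
    MVHom M O (g ∘ f) := by
  refine ⟨fun x y => ?_, fun x => ?_, ?_⟩
  · show g (f (M.oplus x y)) = _
    rw [hf.1, hg.1]; rfl
  · show g (f (M.star x)) = _
    rw [hf.2.1, hg.2.1]; rfl
  · show g (f M.zero) = _
    rw [hf.2.2, hg.2.2]

lemma pmvhom_comp {A : Type*} {B : Type*} {C : Type*} {M : PMVAlg A} {N : PMVAlg B}
    {O : PMVAlg C} {f : A → B} {g : B → C} (hf : PMVHom M N f) (hg : PMVHom N O g) :
    PMVHom M O (g ∘ f) := by
  refine ⟨mvhom_comp hf.1 hg.1, fun x y => ?_⟩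
  show g (f (M.mul x y)) = _
  rw [hf.2, hg.2]; rfl

lemma psub_val_hom {B : Type*} {P : PMVAlg B} (S : P.PSub) :
    PMVHom S.alg P Subtype.val :=
  ⟨⟨fun _ _ => rfl, fun _ => rfl, rfl⟩, fun _ _ => rfl⟩

lemma qalg_mk_pmvhom {B : Type*} (P : PMVAlg B) (I : Set B) (hI : P.toMVAlg.IsIdeal I) :
    PMVHom P (P.qalg I hI) (Quotient.mk _) :=
  ⟨qalg_mk_hom P I hI, fun _ _ => rfl⟩

namespace MVAlg

variable {A : Type*} {M : MVAlg A}

lemma oplus_eq_zero {a b : A} (h : M.oplus a b = M.zero) : a = M.zero ∧ b = M.zero := by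
  constructor
  · exact le_zero_eq (h ▸ le_oplus_self a b)
  · exact le_zero_eq (h ▸ le_oplus_self' b a)

end MVAlg

lemma qd_eq_zero {B : Type*} {P : PMVAlg B} {a b : B}
    (h : P.qd a b = P.toMVAlg.zero) : a = b := by
  have h2 := MVAlg.oplus_eq_zero (M := P.toMVAlg) h
  exact MVAlg.le_antisymm (MVAlg.le_iff_msub_zero.mpr h2.1) (MVAlg.le_iff_msub_zero.mpr h2.2)

/-- Small copy of a PMV-algebra that injects into a `Type 0`, in any universe. -/
lemma small_copy.{uu} {BC : Type*} {Z : Type} (P : PMVAlg BC) (f : BC → Z)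
    (hf : Function.Injective f) :
    ∃ (QC : Type uu) (Q : PMVAlg QC) (j : BC ≃ QC),
      PMVHom P Q j ∧ PMVHom Q P j.symm ∧ (P.Semisimple → Q.Semisimple) := by
  let e : ULift.{uu} ↥(Set.range f) ≃ BC := Equiv.ulift.trans (Equiv.ofInjective f hf).symm
  refine ⟨ULift.{uu} ↥(Set.range f), P.transport e, e.symm, transport_hom_symm P e, ?_,
    fun h => transport_semisimple P e h⟩
  have : ⇑e.symm.symm = ⇑e := by simp
  rw [this]
  exact transport_hom P e

/-- Main auxiliary statement with fully named universes. -/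
theorem stmt18_aux.{uA, uP, uT, uB} {FC : Type uA} (F : MVAlg FC) (hF : F.Semisimple)
    (n : ℕ) (hn : 1 ≤ n) (x : Fin n → FC)
    (hfree : ∀ (MC : Type uP) (M : MVAlg MC) (m : Fin n → MC),
      ∃! h : FC → MC, MVHom F M h ∧ ∀ i, h (x i) = m i)
    {TC : Type uT} (T : PMVAlg TC) (ε : FC → TC) (hT : IsTensorPMV.{uA, uT, uB} F T ε)
    {PC : Type uP} (P : PMVAlg PC) (hP : P.Semisimple) (p : Fin n → PC) :
    ∃! h : TC → PC, PMVHom T P h ∧ ∀ i, h (ε (x i)) = p i := by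
  classical
  obtain ⟨hTss, hεhom, hεinj, huniv⟩ := hT
  obtain ⟨f₀, ⟨hf₀hom, hf₀x⟩, hf₀uniq⟩ := hfree PC P.toMVAlg p
  -- ===== Existence =====
  set S : P.PSub := PTermN.rangeSub P p with hS
  obtain ⟨f₁, ⟨hf₁hom, hf₁x⟩, -⟩ :=
    hfree ↥S.carrier S.alg.toMVAlg (fun i => ⟨p i, PTermN.var_mem P p i⟩)
  obtain ⟨u, hu⟩ := (countable_iff_exists_injective ↥S.carrier).mp inferInstance
  obtain ⟨QC, Q, j, hj, hjsymm, hQssOf⟩ := small_copy.{uB} S.alg u hu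
  have hQss : Q.Semisimple := hQssOf (PMVAlg.PSub.semisimple P hP)
  have hf₄ : MVHom F Q.toMVAlg (⇑j ∘ f₁) := mvhom_comp hf₁hom hj.1
  obtain ⟨g, ⟨hg, hgε⟩, -⟩ := huniv QC Q hQss (⇑j ∘ f₁) hf₄
  set h : TC → PC := (Subtype.val ∘ ⇑j.symm) ∘ g with hh
  have hhom : PMVHom T P h :=
    pmvhom_comp hg (pmvhom_comp hjsymm (psub_val_hom S))
  have hprop : ∀ i, h (ε (x i)) = p i := by
    intro i
    have h1 : g (ε (x i)) = j (f₁ (x i)) := congrFun hgε (x i)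
    show Subtype.val (j.symm (g (ε (x i)))) = p i
    rw [h1, Equiv.symm_apply_apply, hf₁x i]
  -- ===== Uniqueness =====
  have key : ∀ h1 h2 : TC → PC,
      (PMVHom T P h1 ∧ ∀ i, h1 (ε (x i)) = p i) →
      (PMVHom T P h2 ∧ ∀ i, h2 (ε (x i)) = p i) → h1 = h2 := by
    rintro h1 h2 ⟨hh1, hx1⟩ ⟨hh2, hx2⟩
    have hc1 : h1 ∘ ε = f₀ :=
      hf₀uniq (h1 ∘ ε) ⟨mvhom_comp hεhom hh1.1, fun i => hx1 i⟩
    have hc2 : h2 ∘ ε = f₀ :=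
      hf₀uniq (h2 ∘ ε) ⟨mvhom_comp hεhom hh2.1, fun i => hx2 i⟩
    funext t
    by_contra hne
    have hδ : P.qd (h1 t) (h2 t) ≠ P.toMVAlg.zero := fun h0 => hne (qd_eq_zero h0)
    have hδ2 : P.qd (h1 t) (h2 t) ∉ ({P.toMVAlg.zero} : Set PC) := by
      simpa using hδ
    rw [show ({P.toMVAlg.zero} : Set PC)
        = {z | ∀ I, P.toMVAlg.IsMaximalIdeal I → z ∈ I} from hP.symm] at hδ2
    rw [Set.mem_setOf_eq] at hδ2
    push_neg at hδ2
    obtain ⟨I, hImax, hδI⟩ := hδ2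
    obtain ⟨QC', Q', j', hj', hj'symm, hQ'ssOf⟩ :=
      small_copy.{uB} (P.qalg I hImax.1) _ (q_inj P hImax)
    have hQ'ss : Q'.Semisimple := hQ'ssOf (q_ss P hImax)
    set χ : PC → QC' := ⇑j' ∘ (Quotient.mk _) with hχdef
    have hχ : PMVHom P Q' χ := pmvhom_comp (qalg_mk_pmvhom P I hImax.1) hj'
    have hf' : MVHom F Q'.toMVAlg (χ ∘ f₀) := mvhom_comp hf₀hom hχ.1
    obtain ⟨g', -, hg'uniq⟩ := huniv QC' Q' hQ'ss (χ ∘ f₀) hf'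
    have e1 : χ ∘ h1 = g' := by
      refine hg'uniq (χ ∘ h1) ⟨pmvhom_comp hh1 hχ, ?_⟩
      rw [Function.comp_assoc, hc1]
    have e2 : χ ∘ h2 = g' := by
      refine hg'uniq (χ ∘ h2) ⟨pmvhom_comp hh2 hχ, ?_⟩
      rw [Function.comp_assoc, hc2]
    have e3 : χ (h1 t) = χ (h2 t) := by
      have := congrFun (e1.trans e2.symm) t
      exact this
    have e4 : Quotient.mk (P.qsetoid I hImax.1) (h1 t) = Quotient.mk _ (h2 t) :=
      j'.injective e3
    have e5 : P.qrel I (h1 t) (h2 t) := Quotient.exact e4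
    exact hδI e5
  exact ⟨h, ⟨hhom, hprop⟩, fun h' hc => key h' h hc ⟨hhom, hprop⟩⟩

end Assembly

/-- the tensor PMV-algebra of the free `n`-generated semisimple MV-algebra
is freely generated (by the images of the free generators) in the class of unital
commutative semisimple PMV-algebras. -/
theorem stmt18 {FC : Type u} (F : MVAlg FC) (hF : F.Semisimple)
    (n : ℕ) (hn : 1 ≤ n) (x : Fin n → FC)
    (hfree : ∀ (MC : Type v) (M : MVAlg MC) (m : Fin n → MC),
      ∃! h : FC → MC, MVHom F M h ∧ ∀ i, h (x i) = m i)
    {TC : Type w} (T : PMVAlg TC) (ε : FC → TC) (hT : IsTensorPMV F T ε)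
    {PC : Type v} (P : PMVAlg PC) (hP : P.Semisimple) (p : Fin n → PC) :
    ∃! h : TC → PC, PMVHom T P h ∧ ∀ i, h (ε (x i)) = p i := by
  exact stmt18_aux F hF n hn x hfree T ε hT P hP p
end
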